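/- arXiv:2003.07589 — 9 statements merged into one kernel-verified Lean document; each statement's English description precedes it below -/
import Mathlib

section
/- Let H be a finite simple graph, f a function from its vertices to the nonnegative integers, and F an edge set with deg_F(v) ≤ f(v) for every vertex v. Then for every vertex subset B and every edge subset I ⊆ δ(B), one has |F ∩ (γ(B) ∪ I)| ≤ ⌊(f(B) + |I|)/2⌋. -/
open Finset
open scoped Classical

/-- Let `H` be a finite simple graph, `f` a function from its
vertices to the nonnegative integers, and `F` an edge set of `H` with
`deg_F(v) ≤ f(v)` for every vertex `v`.  Then for every vertex subset `B` and
every edge subset `I ⊆ δ(B)`, one has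
`|F ∩ (γ(B) ∪ I)| ≤ ⌊(f(B) + |I|) / 2⌋`. -/
theorem stmt_1 {V : Type*} [Fintype V] [DecidableEq V] (H : SimpleGraph V)
    (f : V → ℕ) (F : Finset (Sym2 V)) (hF : ∀ e ∈ F, e ∈ H.edgeSet)
    (hdeg : ∀ v : V, (F.filter (fun e => v ∈ e)).card ≤ f v)
    (B : Finset V) (I : Finset (Sym2 V))
    (hI : ∀ e ∈ I, e ∈ H.edgeSet ∧ (∃ a ∈ e, a ∈ B) ∧ ∃ a ∈ e, a ∉ B) :
    (F.filter (fun e => (∀ a ∈ e, a ∈ B) ∨ e ∈ I)).card ≤ (∑ v ∈ B, f v + I.card) / 2 := by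
  set F' := F.filter (fun e => (∀ a ∈ e, a ∈ B) ∨ e ∈ I) with hF'
  rw [Nat.le_div_iff_mul_le (by norm_num)]
  -- key pointwise bound
  have key : ∀ e ∈ F', 2 ≤ (B.filter (fun v => v ∈ e)).card + (if e ∈ I then 1 else 0) := by
    intro e he
    have heF : e ∈ F := mem_of_mem_filter e he
    have hcond := (mem_filter.mp he).2
    have hnd : ¬ e.IsDiag := (H.not_isDiag_of_mem_edgeSet) (hF e heF)
    induction e using Sym2.ind with
    | _ a b =>
      have hab : a ≠ b := by simpa [Sym2.isDiag_iff_proj_eq] using hnd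
      by_cases hIe : s(a, b) ∈ I
      · simp only [hIe, if_pos]
        have ⟨x, hx, hxB⟩ := (hI _ hIe).2.1
        have : x ∈ B.filter (fun v => v ∈ s(a, b)) := mem_filter.mpr ⟨hxB, hx⟩
        have := card_pos.mpr ⟨x, this⟩
        omega
      · have hall : ∀ a_1 ∈ s(a, b), a_1 ∈ B := hcond.resolve_right hIe
        have hsub : ({a, b} : Finset V) ⊆ B.filter (fun v => v ∈ s(a, b)) := by
          intro x hx
          simp only [mem_insert, mem_singleton] at hx
          rcases hx with rfl | rfl
          · exact mem_filter.mpr ⟨hall x (by simp), by simp⟩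
          · exact mem_filter.mpr ⟨hall x (by simp), by simp⟩
        have h2 : ({a, b} : Finset V).card = 2 := card_pair hab
        have := card_le_card hsub
        omega
  have hswap : ∑ v ∈ B, (F'.filter (fun e => v ∈ e)).card
      = ∑ e ∈ F', (B.filter (fun v => v ∈ e)).card := by
    simp only [card_filter]
    exact sum_comm
  have hstep : 2 * F'.card ≤ ∑ e ∈ F', ((B.filter (fun v => v ∈ e)).card
      + (if e ∈ I then 1 else 0)) := by
    calc 2 * F'.card = ∑ _e ∈ F', 2 := by simp [mul_comm]
    _ ≤ _ := sum_le_sum key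
  have hIbound : ∑ e ∈ F', (if e ∈ I then 1 else 0) ≤ I.card := by
    rw [← card_filter]
    exact card_le_card (fun e he => (mem_filter.mp he).2)
  have hfbound : ∑ e ∈ F', (B.filter (fun v => v ∈ e)).card ≤ ∑ v ∈ B, f v := by
    rw [← hswap]
    refine sum_le_sum fun v _ => ?_
    exact le_trans (card_le_card (filter_subset_filter _ (filter_subset _ _))) (hdeg v)
  rw [sum_add_distrib] at hstep
  omega
end

section
/- Let F and F* be perfect f-factors of 𝒢, let y:𝒱→ℤ, let Ω be a finite family of pairs (B, I(B)) with B ⊆ 𝒱 and I(B) ⊆ δ(B), and let z:Ω→ℤ be nonnegative. Define yz(u,v) := y(u)+y(v)+Σ_{(B,I(B))∈Ω : (u,v)∈γ(B)∪I(B)} z(B). Assume approximate complementary slackness: (dominance) yz(e) ≥ μ(e)−2 for every e∈ℰ; (tightness) yz(e) ≤ μ(e) for every e∈F; (maturity) |F ∩ (γ(B)∪I(B))| = ⌊(f(B)+|I(B)|)/2⌋ for every (B,I(B))∈Ω. Then μ(F) ≥ μ(F*) − f(𝒱), where f(𝒱)=Σ_{v∈𝒱}f(v). -/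
open Finset
open scoped Classical

/-- An edge `e` belongs to `γ(B) ∪ I(B)` for a blossom-pair `p = (B, I(B))`:
either both endpoints of `e` lie in `B`, or `e ∈ I(B)`. -/
def inGamI {V : Type*} (p : Finset V × Finset (Sym2 V)) (e : Sym2 V) : Prop :=
  (∀ a ∈ e, a ∈ p.1) ∨ e ∈ p.2

/-- `yz(u,v) = y(u) + y(v) + Σ_{(B,I(B)) ∈ Ω : (u,v) ∈ γ(B) ∪ I(B)} z(B)`. -/
noncomputable def yzP {V : Type*} (y : V → ℤ)
    (Ω : Finset (Finset V × Finset (Sym2 V)))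
    (z : Finset V × Finset (Sym2 V) → ℤ) (u v : V) : ℤ :=
  y u + y v + ∑ p ∈ Ω.filter (fun p => inGamI p s(u, v)), z p

noncomputable def yzE {V : Type*} (y : V → ℤ)
    (Ω : Finset (Finset V × Finset (Sym2 V)))
    (z : Finset V × Finset (Sym2 V) → ℤ) (e : Sym2 V) : ℤ :=
  Sym2.lift ⟨fun u v => yzP y Ω z u v, by
    intro u v
    simp only [yzP]
    rw [Sym2.eq_swap]
    ring⟩ e

lemma yzE_mk {V : Type*} (y : V → ℤ) (Ω : Finset (Finset V × Finset (Sym2 V)))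
    (z : Finset V × Finset (Sym2 V) → ℤ) (u v : V) :
    yzE y Ω z s(u, v) = yzP y Ω z u v := rfl

lemma filter_mem_pair {V : Type*} [Fintype V] [DecidableEq V] {u v : V} (h : u ≠ v) :
    (Finset.univ.filter (fun a => a ∈ s(u, v))) = {u, v} := by
  ext a
  simp [Sym2.mem_iff]

lemma two_le_filter {V : Type*} [DecidableEq V] (B : Finset V) (e : Sym2 V)
    (hd : ¬e.IsDiag) (h : ∀ a ∈ e, a ∈ B) :
    2 ≤ (B.filter (fun v => v ∈ e)).card := by
  induction e using Sym2.ind with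
  | _ u v =>
    have hne : u ≠ v := fun hh => hd (by simp [hh])
    have hsub : ({u, v} : Finset V) ⊆ B.filter (fun a => a ∈ s(u, v)) := by
      intro a ha
      rcases Finset.mem_insert.mp ha with hh | hh
      · subst hh
        exact Finset.mem_filter.mpr ⟨h a (by simp), by simp⟩
      · rw [Finset.mem_singleton.mp hh]
        exact Finset.mem_filter.mpr ⟨h v (by simp), by simp⟩
    calc 2 = ({u, v} : Finset V).card := (Finset.card_pair hne).symm
      _ ≤ _ := Finset.card_le_card hsub

/-- If a perfect `f`-factor `F`, duals `y, z ≥ 0` and a family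
`Ω` of pairs `(B, I(B))` with `I(B) ⊆ δ(B)` satisfy approximate complementary
slackness (dominance `yz(e) ≥ μ(e) − 2` on all edges, tightness `yz(e) ≤ μ(e)`
on `F`, and maturity `|F ∩ (γ(B) ∪ I(B))| = ⌊(f(B)+|I(B)|)/2⌋`), then for any
perfect `f`-factor `F*` one has `μ(F) ≥ μ(F*) − f(𝒱)`. -/
theorem stmt_2 {V : Type*} [Fintype V] [DecidableEq V]
    (ℰ : Finset (Sym2 V)) (hE : ∀ e ∈ ℰ, ¬ e.IsDiag)
    (μ : Sym2 V → ℤ) (f : V → ℕ) (hf : ∀ v, 0 < f v)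
    (F Fstar : Finset (Sym2 V)) (hFE : F ⊆ ℰ) (hFsE : Fstar ⊆ ℰ)
    (hFdeg : ∀ v : V, (F.filter (fun e => v ∈ e)).card = f v)
    (hFsdeg : ∀ v : V, (Fstar.filter (fun e => v ∈ e)).card = f v)
    (y : V → ℤ) (Ω : Finset (Finset V × Finset (Sym2 V)))
    (hΩ : ∀ p ∈ Ω, ∀ e ∈ p.2, e ∈ ℰ ∧ (∃ a ∈ e, a ∈ p.1) ∧ ∃ a ∈ e, a ∉ p.1)
    (z : Finset V × Finset (Sym2 V) → ℤ) (hz : ∀ p ∈ Ω, 0 ≤ z p)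
    (dominance : ∀ u v : V, s(u, v) ∈ ℰ → yzP y Ω z u v ≥ μ s(u, v) - 2)
    (tightness : ∀ u v : V, s(u, v) ∈ F → yzP y Ω z u v ≤ μ s(u, v))
    (maturity : ∀ p ∈ Ω,
      (F.filter (fun e => inGamI p e)).card = (∑ v ∈ p.1, f v + p.2.card) / 2) :
    ∑ e ∈ F, μ e ≥ ∑ e ∈ Fstar, μ e - (∑ v : V, f v : ℤ) := by
  -- double counting swap
  have swap : ∀ (G : Finset (Sym2 V)) (B : Finset V),
      ∑ v ∈ B, (G.filter (fun e => v ∈ e)).card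
        = ∑ e ∈ G, (B.filter (fun v => v ∈ e)).card := by
    intro G B
    simp only [Finset.card_filter]
    rw [Finset.sum_comm]
  -- decomposition of ∑ yzE over a perfect f-factor
  have hsum : ∀ (G : Finset (Sym2 V)), G ⊆ ℰ →
      (∀ v : V, (G.filter (fun e => v ∈ e)).card = f v) →
      ∑ e ∈ G, yzE y Ω z e
        = ∑ v : V, (f v : ℤ) * y v
          + ∑ p ∈ Ω, z p * (G.filter (fun e => inGamI p e)).card := by
    intro G hGE hGdeg
    have step : ∀ e ∈ G, yzE y Ω z e
        = (∑ a ∈ Finset.univ.filter (fun a => a ∈ e), y a)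
          + ∑ p ∈ Ω.filter (fun p => inGamI p e), z p := by
      intro e he
      induction e using Sym2.ind with
      | _ u v =>
        have hne : u ≠ v := by
          intro h
          exact hE _ (hGE he) (by simp [h])
        rw [yzE_mk, yzP, filter_mem_pair hne, Finset.sum_pair hne]
    rw [Finset.sum_congr rfl step, Finset.sum_add_distrib]
    congr 1
    · -- y part
      simp only [Finset.sum_filter]
      rw [Finset.sum_comm]
      apply Finset.sum_congr rfl
      intro v _
      rw [← Finset.sum_filter, Finset.sum_const, hGdeg v]
      push_cast
      ring
    · -- z part
      simp only [Finset.sum_filter]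
      rw [Finset.sum_comm]
      apply Finset.sum_congr rfl
      intro p _
      rw [← Finset.sum_filter, Finset.sum_const]
      push_cast
      ring
  -- bound for any perfect f-factor
  have hbound : ∀ (G : Finset (Sym2 V)), G ⊆ ℰ →
      (∀ v : V, (G.filter (fun e => v ∈ e)).card = f v) →
      ∀ p ∈ Ω,
      (G.filter (fun e => inGamI p e)).card ≤ (∑ v ∈ p.1, f v + p.2.card) / 2 := by
    intro G hGE hGdeg p hp
    rw [Nat.le_div_iff_mul_le (by norm_num : 0 < 2)]
    set S := G.filter (fun e => inGamI p e) with hS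
    set A := G.filter (fun e => ∀ a ∈ e, a ∈ p.1) with hA
    have hAS : A ⊆ S := by
      intro e he
      simp only [hA, Finset.mem_filter] at he
      rw [hS]
      exact Finset.mem_filter.mpr ⟨he.1, Or.inl he.2⟩
    have hcard : (S \ A).card + A.card = S.card :=
      Finset.card_sdiff_add_card_eq_card hAS
    have hCI : (S \ A).card ≤ p.2.card := by
      apply Finset.card_le_card
      intro e he
      rw [Finset.mem_sdiff, hS, hA, Finset.mem_filter, Finset.mem_filter] at he
      simp only [inGamI] at he
      rcases he.1.2 with h | h
      · exact absurd ⟨he.1.1, h⟩ he.2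
      · exact h
    have hfB : 2 * A.card + (S \ A).card ≤ ∑ v ∈ p.1, f v := by
      have h1 : ∑ v ∈ p.1, f v
          = ∑ e ∈ G, (p.1.filter (fun v => v ∈ e)).card := by
        rw [← swap]
        exact (Finset.sum_congr rfl (fun v _ => hGdeg v)).symm
      rw [h1]
      have hsub : A ∪ (S \ A) ⊆ G := by
        intro e he
        rcases Finset.mem_union.mp he with h | h
        · exact Finset.mem_of_mem_filter _ h
        · exact Finset.mem_of_mem_filter _ (Finset.mem_sdiff.mp h).1
      have hdisj : Disjoint A (S \ A) := Finset.disjoint_sdiff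
      calc 2 * A.card + (S \ A).card
          ≤ (∑ e ∈ A, (p.1.filter (fun v => v ∈ e)).card)
            + ∑ e ∈ S \ A, (p.1.filter (fun v => v ∈ e)).card := by
            gcongr
            · have : A.card • 2 ≤ ∑ e ∈ A, (p.1.filter (fun v => v ∈ e)).card := by
                apply Finset.card_nsmul_le_sum
                intro e he
                simp only [hA, Finset.mem_filter] at he
                exact two_le_filter p.1 e (hE e (hGE he.1)) he.2
              simpa [mul_comm] using this
            · have : (S \ A).card • 1 ≤ ∑ e ∈ S \ A, (p.1.filter (fun v => v ∈ e)).card := by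
                apply Finset.card_nsmul_le_sum
                intro e he
                have heI : e ∈ p.2 := by
                  rw [Finset.mem_sdiff, hS, hA, Finset.mem_filter, Finset.mem_filter] at he
                  simp only [inGamI] at he
                  rcases he.1.2 with h | h
                  · exact absurd ⟨he.1.1, h⟩ he.2
                  · exact h
                obtain ⟨a, hae, hap⟩ := (hΩ p hp e heI).2.1
                have : a ∈ p.1.filter (fun v => v ∈ e) := Finset.mem_filter.mpr ⟨hap, hae⟩
                exact Finset.card_pos.mpr ⟨a, this⟩
              simpa using this
        _ = ∑ e ∈ A ∪ (S \ A), (p.1.filter (fun v => v ∈ e)).card := by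
            rw [Finset.sum_union hdisj]
        _ ≤ ∑ e ∈ G, (p.1.filter (fun v => v ∈ e)).card :=
            Finset.sum_le_sum_of_subset hsub
    omega
  -- total degree: f(𝒱) = 2|G|
  have htot : ∀ (G : Finset (Sym2 V)), G ⊆ ℰ →
      (∀ v : V, (G.filter (fun e => v ∈ e)).card = f v) →
      ∑ v : V, f v = 2 * G.card := by
    intro G hGE hGdeg
    have h1 : ∑ v : V, f v = ∑ e ∈ G, (Finset.univ.filter (fun v => v ∈ e)).card := by
      rw [← swap]
      exact (Finset.sum_congr rfl (fun v _ => hGdeg v)).symm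
    rw [h1]
    rw [Finset.sum_congr rfl (fun e he => ?_), Finset.sum_const, smul_eq_mul, mul_comm]
    induction e using Sym2.ind with
    | _ u v =>
      have hne : u ≠ v := by
        intro h
        exact hE _ (hGE he) (by simp [h])
      rw [filter_mem_pair hne, Finset.card_pair hne]
  -- tightness: ∑_{e∈F} yzE ≤ μ(F)
  have hT : ∑ e ∈ F, yzE y Ω z e ≤ ∑ e ∈ F, μ e := by
    apply Finset.sum_le_sum
    intro e he
    induction e using Sym2.ind with
    | _ u v => exact tightness u v he
  -- dominance: μ(F*) ≤ ∑_{e∈F*} yzE + 2|F*|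
  have hD : ∑ e ∈ Fstar, μ e ≤ ∑ e ∈ Fstar, yzE y Ω z e + 2 * Fstar.card := by
    have : ∀ e ∈ Fstar, μ e ≤ yzE y Ω z e + 2 := by
      intro e he
      induction e using Sym2.ind with
      | _ u v =>
        have := dominance u v (hFsE he)
        rw [yzE_mk]
        omega
    calc ∑ e ∈ Fstar, μ e ≤ ∑ e ∈ Fstar, (yzE y Ω z e + 2) := Finset.sum_le_sum this
      _ = ∑ e ∈ Fstar, yzE y Ω z e + 2 * Fstar.card := by
          rw [Finset.sum_add_distrib, Finset.sum_const, nsmul_eq_mul]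
          push_cast
          ring
  -- compare the z-parts
  have hcmp : ∑ e ∈ Fstar, yzE y Ω z e ≤ ∑ e ∈ F, yzE y Ω z e := by
    rw [hsum F hFE hFdeg, hsum Fstar hFsE hFsdeg]
    apply add_le_add_right
    apply Finset.sum_le_sum
    intro p hp
    apply mul_le_mul_of_nonneg_left _ (hz p hp)
    have h1 := hbound Fstar hFsE hFsdeg p hp
    have h2 := maturity p hp
    rw [h2]
    exact_mod_cast Nat.cast_le.mpr h1
  have hfV : (∑ v : V, f v : ℤ) = 2 * Fstar.card := by
    exact_mod_cast congrArg (Nat.cast : ℕ → ℤ) (htot Fstar hFsE hFsdeg)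
  calc ∑ e ∈ Fstar, μ e - (∑ v : V, f v : ℤ)
      ≤ ∑ e ∈ Fstar, yzE y Ω z e + 2 * Fstar.card - (∑ v : V, f v : ℤ) := by linarith
    _ = ∑ e ∈ Fstar, yzE y Ω z e := by rw [hfV]; ring
    _ ≤ ∑ e ∈ F, yzE y Ω z e := hcmp
    _ ≤ ∑ e ∈ F, μ e := hT
end

section
/- Suppose the edge weights μ̄₀, the edge set F₀, the duals y₀:𝒱→ℤ, z₀:Ω→ℤ (z₀ ≥ 0) satisfy: yz₀(e) ≥ μ̄₀(e)−2 for every e∈ℰ and yz₀(e) ≤ μ̄₀(e) for every e∈F₀. After the scaling step set y(u) := 2y₀(u)+3 for every vertex u, z(B) := 2z₀(B) for every B∈Ω, and let μ̄:ℰ→ℤ be any weight function with 2μ̄₀(e) ≤ μ̄(e) ≤ 2μ̄₀(e)+2 for every e∈ℰ. Then: (1) μ̄(e) ≤ yz(e) for every e∈ℰ; (2) μ̄(e) ≥ yz(e)−6 for every e∈F₀. -/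
open Finset
open scoped Classical

/-- Suppose `μ̄₀, F₀, y₀, z₀ ≥ 0` satisfy `yz₀(e) ≥ μ̄₀(e) − 2`
on all edges and `yz₀(e) ≤ μ̄₀(e)` on `F₀`.  After the scaling step
`y = 2y₀ + 3`, `z = 2z₀`, and for any `μ̄` with `2μ̄₀(e) ≤ μ̄(e) ≤ 2μ̄₀(e) + 2`:
(1) `μ̄(e) ≤ yz(e)` for every edge `e`; (2) `μ̄(e) ≥ yz(e) − 6` for `e ∈ F₀`. -/
theorem stmt_3 {V : Type*} [Fintype V] [DecidableEq V]
    (ℰ F₀ : Finset (Sym2 V)) (hF₀E : F₀ ⊆ ℰ)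
    (μ₀ μ : Sym2 V → ℤ) (y₀ : V → ℤ)
    (Ω : Finset (Finset V × Finset (Sym2 V)))
    (hΩ : ∀ p ∈ Ω, ∀ e ∈ p.2, e ∈ ℰ ∧ (∃ a ∈ e, a ∈ p.1) ∧ ∃ a ∈ e, a ∉ p.1)
    (z₀ : Finset V × Finset (Sym2 V) → ℤ) (hz₀ : ∀ p ∈ Ω, 0 ≤ z₀ p)
    (dominance : ∀ u v : V, s(u, v) ∈ ℰ → yzP y₀ Ω z₀ u v ≥ μ₀ s(u, v) - 2)
    (tightness : ∀ u v : V, s(u, v) ∈ F₀ → yzP y₀ Ω z₀ u v ≤ μ₀ s(u, v))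
    (hμ : ∀ e ∈ ℰ, 2 * μ₀ e ≤ μ e ∧ μ e ≤ 2 * μ₀ e + 2) :
    (∀ u v : V, s(u, v) ∈ ℰ →
      μ s(u, v) ≤ yzP (fun x => 2 * y₀ x + 3) Ω (fun p => 2 * z₀ p) u v) ∧
    (∀ u v : V, s(u, v) ∈ F₀ →
      μ s(u, v) ≥ yzP (fun x => 2 * y₀ x + 3) Ω (fun p => 2 * z₀ p) u v - 6) := by
  have key : ∀ u v : V, yzP (fun x => 2 * y₀ x + 3) Ω (fun p => 2 * z₀ p) u v
      = 2 * yzP y₀ Ω z₀ u v + 6 := by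
    intro u v
    simp only [yzP, ← Finset.mul_sum]
    ring
  constructor
  · intro u v he
    have h1 := dominance u v he
    have h2 := (hμ _ he).2
    rw [key]; linarith
  · intro u v he
    have h1 := tightness u v he
    have h2 := (hμ _ (hF₀E he)).1
    rw [key]; linarith
end

section
/- Let B ⊆ 𝒱 be such that every edge of δ(B) joins an original vertex in B to an auxiliary vertex outside B. Let η(B) be either null or an edge of δ(B); if η(B)=(u,e_u) with e_u auxiliary, let ζ(B)=(e_u,e_v) be the other edge incident to e_u. Set I(B) := δ_{F₀}(B) △ {η(B)}. Let y₀:𝒱→ℤ and let z₀(B) be an even nonnegative integer, and define y(w) := y₀(w) + z₀(B)/2 if w∈B or w is an endpoint of some edge of I(B), and y(w) := y₀(w) otherwise. Then: (1) for every edge (u,v)∈ℰ, y(u)+y(v) ≥ y₀(u)+y₀(v) + z₀(B)·[(u,v)∈γ(B)∪I(B)]; (2) for every edge (u,v)∈F₀, y(u)+y(v) = y₀(u)+y₀(v) + z₀(B)·[(u,v)∈γ(B)∪I(B)] + (z₀(B)/2)·[(u,v)∈{ζ(B),η(B)}]. -/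
open Finset
open scoped Classical

/-- the dissolve step.  In the blowup graph (original
vertices `orig`, auxiliary vertices outside `orig` with `f = 1` and exactly
two incident edges), let `B` be such that every edge of `δ(B)` joins an
original vertex in `B` to an auxiliary vertex outside `B`, let `η` be null or
an edge of `δ(B)`, let `ζ` be the other edge incident to the auxiliary
endpoint of `η`, and let `I(B) = δ_{F₀}(B) △ {η}`.  If `y` raises `y₀` by
`z₀(B)/2` exactly on `B` and the endpoints of `I(B)`-edges, then:
(1) `y(u)+y(v) ≥ y₀(u)+y₀(v) + z₀(B)·[(u,v) ∈ γ(B)∪I(B)]` for every edge;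
(2) `y(u)+y(v) = y₀(u)+y₀(v) + z₀(B)·[(u,v) ∈ γ(B)∪I(B)]
      + (z₀(B)/2)·[(u,v) ∈ {ζ(B),η(B)}]` for every edge of `F₀`. -/
theorem stmt_4 {V : Type*} [Fintype V] [DecidableEq V]
    (ℰ : Finset (Sym2 V)) (hE : ∀ e ∈ ℰ, ¬ e.IsDiag)
    (orig : Set V) (f : V → ℕ)
    (haux1 : ∀ v, v ∉ orig → f v = 1)
    (hauxdeg : ∀ v, v ∉ orig → (ℰ.filter (fun e => v ∈ e)).card = 2)
    (F₀ : Finset (Sym2 V)) (hF₀E : F₀ ⊆ ℰ)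
    (hfac : ∀ v : V, (F₀.filter (fun e => v ∈ e)).card ≤ f v)
    (B : Finset V)
    (hδ : ∀ e ∈ ℰ, ((∃ a ∈ e, a ∈ B) ∧ ∃ a ∈ e, a ∉ B) →
      ∃ a x, a ∈ B ∧ a ∈ orig ∧ x ∉ B ∧ x ∉ orig ∧ e = s(a, x))
    (η ζ : Option (Sym2 V))
    (hη : ∀ e ∈ η, e ∈ ℰ ∧ (∃ a ∈ e, a ∈ B) ∧ ∃ a ∈ e, a ∉ B)
    (hζnull : η = none → ζ = none)
    (hζ : ∀ e ∈ η, ∃ a x, e = s(a, x) ∧ a ∈ B ∧ x ∉ orig ∧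
      ∃ e' ∈ ζ, e' ∈ ℰ ∧ x ∈ e' ∧ e' ≠ e ∧
        (∃ x', e' = s(x, x') ∧ x' ∉ orig) ∧
        ∀ e'' ∈ ℰ, x ∈ e'' → e'' = e ∨ e'' = e')
    (y₀ : V → ℤ) (zB : ℤ) (hzB : 0 ≤ zB) (hzBeven : Even zB) :
    ∀ IB : Finset (Sym2 V),
      IB = ((F₀.filter (fun e => (∃ a ∈ e, a ∈ B) ∧ ∃ a ∈ e, a ∉ B)) \ η.toFinset) ∪
           (η.toFinset \ (F₀.filter (fun e => (∃ a ∈ e, a ∈ B) ∧ ∃ a ∈ e, a ∉ B))) →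
    ∀ y : V → ℤ,
      (∀ u : V, y u = if u ∈ B ∨ ∃ e ∈ IB, u ∈ e then y₀ u + zB / 2 else y₀ u) →
    (∀ u v : V, s(u, v) ∈ ℰ →
      y u + y v ≥ y₀ u + y₀ v +
        (if (∀ a ∈ s(u, v), a ∈ B) ∨ s(u, v) ∈ IB then zB else 0)) ∧
    (∀ u v : V, s(u, v) ∈ F₀ →
      y u + y v = y₀ u + y₀ v +
        (if (∀ a ∈ s(u, v), a ∈ B) ∨ s(u, v) ∈ IB then zB else 0) +
        (if some s(u, v) = ζ ∨ some s(u, v) = η then zB / 2 else 0)) := by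

  intro IB hIB y hy
  obtain ⟨k, hk⟩ := hzBeven
  -- degree-one helper: an auxiliary vertex lies in at most one F₀ edge
  have deg1 : ∀ x : V, x ∉ orig → ∀ e₁ ∈ F₀, ∀ e₂ ∈ F₀, x ∈ e₁ → x ∈ e₂ → e₁ = e₂ := by
    intro x hx e₁ h1 e₂ h2 hx1 hx2
    by_contra hne
    have hsub : ({e₁, e₂} : Finset (Sym2 V)) ⊆ F₀.filter (fun e => x ∈ e) := by
      intro e heP
      simp only [Finset.mem_insert, Finset.mem_singleton] at heP
      rcases heP with rfl | rfl <;> simp [Finset.mem_filter, h1, h2, hx1, hx2]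
    have hcard := Finset.card_le_card hsub
    rw [Finset.card_pair hne] at hcard
    have hf := hfac x
    rw [haux1 x hx] at hf
    omega
  have hIBmem : ∀ e : Sym2 V, e ∈ IB ↔
      ((e ∈ F₀ ∧ ((∃ a ∈ e, a ∈ B) ∧ ∃ a ∈ e, a ∉ B)) ∧ η ≠ some e) ∨
      (η = some e ∧ ¬(e ∈ F₀ ∧ ((∃ a ∈ e, a ∈ B) ∧ ∃ a ∈ e, a ∉ B))) := by
    intro e
    subst hIB
    simp only [Finset.mem_union, Finset.mem_sdiff, Finset.mem_filter,
      Option.mem_toFinset, Option.mem_def]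
    try tauto
  have hIBcross : ∀ e ∈ IB, (∃ a ∈ e, a ∈ B) ∧ ∃ a ∈ e, a ∉ B := by
    intro e heIB
    rcases (hIBmem e).1 heIB with ⟨⟨_, hc⟩, _⟩ | ⟨hee, _⟩
    · exact hc
    · exact (hη e (Option.mem_def.2 hee)).2
  have hIBE : ∀ e ∈ IB, e ∈ ℰ := by
    intro e heIB
    rcases (hIBmem e).1 heIB with ⟨⟨hF, _⟩, _⟩ | ⟨hee, _⟩
    · exact hF₀E hF
    · exact (hη e (Option.mem_def.2 hee)).1
  have hIBinF : ∀ e ∈ IB, e ∈ F₀ ∨ η = some e := by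
    intro e heIB
    rcases (hIBmem e).1 heIB with ⟨⟨hF, _⟩, _⟩ | ⟨hee, _⟩
    · exact Or.inl hF
    · exact Or.inr hee
  -- analysis of η / ζ
  have ηcase : η = none ∨ ∃ e₀ e₁ a x x', η = some e₀ ∧ ζ = some e₁ ∧
      e₀ ∈ ℰ ∧ e₁ ∈ ℰ ∧ e₀ = s(a, x) ∧ e₁ = s(x, x') ∧ a ∈ B ∧
      x ∉ B ∧ x ∉ orig ∧ x' ∉ B ∧ x' ∉ orig ∧ x ≠ x' ∧ e₀ ≠ e₁ ∧
      (∀ e'' ∈ ℰ, x ∈ e'' → e'' = e₀ ∨ e'' = e₁) := by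
    cases η with
    | none => exact Or.inl rfl
    | some e₀ =>
      right
      obtain ⟨he₀E, hcr⟩ := hη e₀ rfl
      obtain ⟨a, x, he₀, haB, hxorig, e₁, hζmem, he₁E, hxe₁, hne10, ⟨x', he₁, hx'orig⟩, huniq⟩ :=
        hζ e₀ rfl
      obtain ⟨a', x₂, ha'B, ha'orig, hx₂B, hx₂orig, he₀'⟩ := hδ e₀ he₀E hcr
      have hxB : x ∉ B := by
        rw [he₀] at he₀'
        rcases Sym2.eq_iff.1 he₀' with ⟨h1, h2⟩ | ⟨h1, h2⟩
        · rw [h2]; exact hx₂B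
        · exact absurd (h1 ▸ haB) hx₂B
      have hx'B : x' ∉ B := by
        intro hx'B
        obtain ⟨a'', x₃, ha''B, ha''orig, _, _, he₁'⟩ := hδ e₁ he₁E
          ⟨⟨x', by rw [he₁]; exact Sym2.mem_mk_right _ _, hx'B⟩,
           ⟨x, by rw [he₁]; exact Sym2.mem_mk_left _ _, hxB⟩⟩
        have : a'' ∈ e₁ := by rw [he₁']; exact Sym2.mem_mk_left _ _
        rw [he₁] at this
        rcases Sym2.mem_iff.1 this with rfl | rfl
        · exact hxorig ha''orig
        · exact hx'orig ha''orig
      have hxx' : x ≠ x' := by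
        intro h
        exact hE e₁ he₁E (by rw [he₁, ← h]; exact Sym2.mk_isDiag_iff.2 rfl)
      have hζ' : ζ = some e₁ := Option.mem_def.1 hζmem
      exact ⟨e₀, e₁, a, x, x', rfl, hζ', he₀E, he₁E, he₀, he₁, haB, hxB, hxorig,
        hx'B, hx'orig, hxx', hne10.symm, huniq⟩
  constructor
  · -- part (1)
    intro u v he
    have hyu := hy u
    have hyv := hy v
    split_ifs with hcond
    · have hu : u ∈ B ∨ ∃ e ∈ IB, u ∈ e := by
        rcases hcond with h | h
        · exact Or.inl (h u (Sym2.mem_mk_left _ _))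
        · exact Or.inr ⟨_, h, Sym2.mem_mk_left _ _⟩
      have hv : v ∈ B ∨ ∃ e ∈ IB, v ∈ e := by
        rcases hcond with h | h
        · exact Or.inl (h v (Sym2.mem_mk_right _ _))
        · exact Or.inr ⟨_, h, Sym2.mem_mk_right _ _⟩
      rw [if_pos hu] at hyu
      rw [if_pos hv] at hyv
      omega
    · split_ifs at hyu hyv <;> omega
  · -- part (2)
    -- the case of a crossing F₀-edge, u ∈ B, v ∉ B
    have caseBn : ∀ u v : V, s(u, v) ∈ F₀ → u ∈ B → v ∉ B →
        y u + y v = y₀ u + y₀ v +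
          (if (∀ a ∈ s(u, v), a ∈ B) ∨ s(u, v) ∈ IB then zB else 0) +
          (if some s(u, v) = ζ ∨ some s(u, v) = η then zB / 2 else 0) := by
      intro u v he hu hv
      have heE := hF₀E he
      have hcr : (∃ a ∈ s(u,v), a ∈ B) ∧ ∃ a ∈ s(u,v), a ∉ B :=
        ⟨⟨u, Sym2.mem_mk_left _ _, hu⟩, ⟨v, Sym2.mem_mk_right _ _, hv⟩⟩
      by_cases hηe : η = some s(u, v)
      · -- e = η
        rcases ηcase with hnone | ⟨e₀, e₁, a, x, x', hη', hζ', _, _, he₀, he₁, haB,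
            hxB, hxorig, hx'B, hx'orig, hxx', hne01, huniq⟩
        · rw [hnone] at hηe; exact absurd hηe (by simp)
        have he₀e : e₀ = s(u, v) := by rw [hη'] at hηe; exact Option.some.inj hηe
        have hvx : v = x := by
          rw [he₀e] at he₀
          rcases Sym2.eq_iff.1 he₀ with ⟨h1, h2⟩ | ⟨h1, h2⟩
          · exact h2.symm ▸ rfl
          · exact absurd (h1 ▸ hu) hxB
        have heIB : s(u, v) ∉ IB := by
          intro h
          rcases (hIBmem _).1 h with ⟨_, hne⟩ | ⟨_, hnF⟩
          · exact hne hηe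
          · exact hnF ⟨he, hcr⟩
        have hcond1 : ¬ ((∀ a ∈ s(u, v), a ∈ B) ∨ s(u, v) ∈ IB) := by
          rintro (h | h)
          · exact hv (h v (Sym2.mem_mk_right _ _))
          · exact heIB h
        have hvraise : ¬ (v ∈ B ∨ ∃ e ∈ IB, v ∈ e) := by
          rintro (h | ⟨e'', h'', hv''⟩)
          · exact hv h
          rcases huniq e'' (hIBE e'' h'') (hvx ▸ hv'') with h' | h'
          · exact heIB (by rwa [h', he₀e] at h'')
          · obtain ⟨⟨b, hb, hbB⟩, -⟩ := hIBcross e'' h''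
            rw [h', he₁] at hb
            rcases Sym2.mem_iff.1 hb with rfl | rfl
            · exact hxB hbB
            · exact hx'B hbB
        rw [hy u, if_pos (Or.inl hu), hy v, if_neg hvraise, if_neg hcond1,
          if_pos (Or.inr hηe.symm)]
        omega
      · -- e ≠ η, so e ∈ IB
        have heIB : s(u, v) ∈ IB := (hIBmem _).2 (Or.inl ⟨⟨he, hcr⟩, fun h => hηe h⟩)
        have hcond2 : ¬ (some s(u, v) = ζ ∨ some s(u, v) = η) := by
          rintro (h | h)
          · rcases ηcase with hnone | ⟨e₀, e₁, a, x, x', hη', hζ', _, _, he₀, he₁, haB,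
                hxB, hxorig, hx'B, hx'orig, hxx', hne01, huniq⟩
            · rw [hζnull hnone] at h; exact absurd h (by simp)
            · rw [hζ'] at h
              have he1 : s(u, v) = e₁ := Option.some.inj h
              rw [he1, he₁] at hcr
              obtain ⟨⟨b, hb, hbB⟩, -⟩ := hcr
              rcases Sym2.mem_iff.1 hb with rfl | rfl
              · exact hxB hbB
              · exact hx'B hbB
          · exact hηe h.symm
        rw [hy u, if_pos (Or.inl hu), hy v,
          if_pos (Or.inr ⟨_, heIB, Sym2.mem_mk_right _ _⟩),
          if_pos (Or.inr heIB), if_neg hcond2]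
        omega
    intro u v he
    have heE := hF₀E he
    by_cases hu : u ∈ B <;> by_cases hv : v ∈ B
    · -- both in B
      have hcond1 : (∀ a ∈ s(u, v), a ∈ B) ∨ s(u, v) ∈ IB := by
        left; intro a ha
        rcases Sym2.mem_iff.1 ha with rfl | rfl
        · exact hu
        · exact hv
      have hcond2 : ¬ (some s(u, v) = ζ ∨ some s(u, v) = η) := by
        rintro (h | h)
        · rcases ηcase with hnone | ⟨e₀, e₁, a, x, x', hη', hζ', _, _, he₀, he₁, haB,
              hxB, hxorig, hx'B, hx'orig, hxx', hne01, huniq⟩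
          · rw [hζnull hnone] at h; exact absurd h (by simp)
          · rw [hζ'] at h
            have he1 : s(u, v) = e₁ := Option.some.inj h
            have : x ∈ s(u, v) := by rw [he1, he₁]; exact Sym2.mem_mk_left _ _
            rcases Sym2.mem_iff.1 this with rfl | rfl
            · exact hxB hu
            · exact hxB hv
        · obtain ⟨-, -, b, hb, hbB⟩ := hη _ (Option.mem_def.2 h.symm)
          rcases Sym2.mem_iff.1 hb with rfl | rfl
          · exact hbB hu
          · exact hbB hv
      rw [hy u, if_pos (Or.inl hu), hy v, if_pos (Or.inl hv), if_pos hcond1,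
        if_neg hcond2]
      omega
    · exact caseBn u v he hu hv
    · have h := caseBn v u (by rwa [Sym2.eq_swap]) hv hu
      rw [Sym2.eq_swap] at h
      linarith
    · -- both out of B
      have notcross : ¬ ((∃ a ∈ s(u,v), a ∈ B) ∧ ∃ a ∈ s(u,v), a ∉ B) := by
        rintro ⟨⟨b, hb, hbB⟩, -⟩
        rcases Sym2.mem_iff.1 hb with rfl | rfl
        · exact hu hbB
        · exact hv hbB
      have heIB : s(u, v) ∉ IB := fun h => notcross (hIBcross _ h)
      have hcond1 : ¬ ((∀ a ∈ s(u, v), a ∈ B) ∨ s(u, v) ∈ IB) := by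
        rintro (h | h)
        · exact hu (h u (Sym2.mem_mk_left _ _))
        · exact heIB h
      by_cases hcond2 : some s(u, v) = ζ ∨ some s(u, v) = η
      · rcases hcond2 with h | h
        swap
        · exact absurd (hη _ (Option.mem_def.2 h.symm)).2 notcross
        rcases ηcase with hnone | ⟨e₀, e₁, a, x, x', hη', hζ', he₀E, he₁E, he₀, he₁,
            haB, hxB, hxorig, hx'B, hx'orig, hxx', hne01, huniq⟩
        · rw [hζnull hnone] at h; exact absurd h (by simp)
        rw [hζ'] at h
        have he1 : s(u, v) = e₁ := Option.some.inj h
        -- e₀ ∉ F₀ hence e₀ ∈ IB, so x is raised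
        have he₀F : e₀ ∉ F₀ := by
          intro hF
          have := deg1 x hxorig e₀ hF (s(u,v)) he
            (by rw [he₀]; exact Sym2.mem_mk_right _ _)
            (by rw [he1, he₁]; exact Sym2.mem_mk_left _ _)
          exact hne01 (this.trans he1)
        have he₀IB : e₀ ∈ IB := (hIBmem e₀).2 (Or.inr ⟨hη', fun hc => he₀F hc.1⟩)
        have claimx : x ∈ B ∨ ∃ e ∈ IB, x ∈ e :=
          Or.inr ⟨e₀, he₀IB, by rw [he₀]; exact Sym2.mem_mk_right _ _⟩
        have claimx' : ¬ (x' ∈ B ∨ ∃ e ∈ IB, x' ∈ e) := by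
          rintro (hB | ⟨e'', h'', hx''⟩)
          · exact hx'B hB
          rcases hIBinF e'' h'' with hF | hsome
          · have hne : e'' ≠ s(u, v) := by
              intro hEq
              exact notcross (hEq ▸ hIBcross e'' h'')
            exact hne (deg1 x' hx'orig e'' hF (s(u,v)) he hx''
              (by rw [he1, he₁]; exact Sym2.mem_mk_right _ _))
          · have he₀'' : e'' = e₀ := by
              rw [hη'] at hsome; exact (Option.some.inj hsome).symm
            rw [he₀'', he₀] at hx''
            rcases Sym2.mem_iff.1 hx'' with rfl | rfl
            · exact hx'B haB
            · exact hxx' rfl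
        rcases Sym2.eq_iff.1 (he1.trans he₁) with ⟨h1, h2⟩ | ⟨h1, h2⟩
        · subst h1; subst h2
          rw [hy u, if_pos claimx, hy v, if_neg claimx', if_neg hcond1,
            if_pos (Or.inl (hζ' ▸ h))]
          omega
        · subst h1; subst h2
          rw [hy u, if_neg claimx', hy v, if_pos claimx, if_neg hcond1,
            if_pos (Or.inl (hζ' ▸ h))]
          omega
      · -- neither ζ nor η
        have claimN : ∀ w, w ∈ s(u, v) → w ∉ B → ¬ (w ∈ B ∨ ∃ e ∈ IB, w ∈ e) := by
          rintro w hwe hwB (h | ⟨e'', h'', hw''⟩)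
          · exact hwB h
          obtain ⟨a', x₂, ha'B, ha'orig, hx₂B, hx₂orig, he''⟩ :=
            hδ e'' (hIBE e'' h'') (hIBcross e'' h'')
          have hworig : w ∉ orig := by
            rw [he''] at hw''
            rcases Sym2.mem_iff.1 hw'' with rfl | rfl
            · exact absurd ha'B hwB
            · exact hx₂orig
          rcases hIBinF e'' h'' with hF | hsome
          · have hne : e'' ≠ s(u, v) := by
              intro hEq
              exact notcross (hEq ▸ hIBcross e'' h'')
            exact hne (deg1 w hworig e'' hF (s(u,v)) he hw'' hwe)
          · rcases ηcase with hnone | ⟨e₀, e₁, a, x, x', hη', hζ', he₀E, he₁E, he₀,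
                he₁, haB, hxB, hxorig, hx'B, hx'orig, hxx', hne01, huniq⟩
            · rw [hnone] at hsome; exact absurd hsome (by simp)
            have he₀'' : e'' = e₀ := by
              rw [hη'] at hsome; exact (Option.some.inj hsome).symm
            have hwx : w = x := by
              rw [he₀'', he₀] at hw''
              rcases Sym2.mem_iff.1 hw'' with rfl | rfl
              · exact absurd haB hwB
              · rfl
            rcases huniq (s(u,v)) heE (hwx ▸ hwe) with hEq | hEq
            · exact notcross (by rw [hEq]; exact (hη e₀ (Option.mem_def.2 hη')).2)
            · exact hcond2 (Or.inl (by rw [hEq, hζ']))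
        have hcond2' : ¬ (some s(u, v) = ζ ∨ some s(u, v) = η) := hcond2
        rw [hy u, if_neg (claimN u (Sym2.mem_mk_left _ _) hu),
          hy v, if_neg (claimN v (Sym2.mem_mk_right _ _) hv),
          if_neg hcond1, if_neg hcond2']
        omega
end

section
/- Let F̂ be an edge set of a finite simple graph, X a vertex set, η(X) either null or an edge of δ(X), and I(X) := δ_{F̂}(X) △ {η(X)}. Then for every alternating walk ρ with respect to F̂ of length at least 2, Diff(ρ, X, F̂) ≥ −1; moreover, if Diff(ρ, X, F̂) = −1, then either ρ contains the edge η(X), or all edges of ρ lie in γ(X) ∪ I(X). -/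
open Finset
open scoped Classical

/-- Let `F̂` be an edge set, `X` a vertex set, `η(X)` null or
an edge of `δ(X)`, and `I(X) = δ_{F̂}(X) △ {η(X)}`.  Then for every alternating
walk `ρ` (with respect to `F̂`, pairwise distinct edges) of length at least 2,
`Diff(ρ, X, F̂) ≥ −1`; moreover, if equality holds, then either `ρ` contains
the edge `η(X)`, or all edges of `ρ` lie in `γ(X) ∪ I(X)`. -/
theorem stmt_5 {V : Type*} [Fintype V] [DecidableEq V]
    (ℰ : Finset (Sym2 V)) (hE : ∀ e ∈ ℰ, ¬ e.IsDiag)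
    (Fh : Finset (Sym2 V)) (hFh : Fh ⊆ ℰ)
    (X : Finset V) (η : Option (Sym2 V))
    (hη : ∀ e ∈ η, e ∈ ℰ ∧ (∃ a ∈ e, a ∈ X) ∧ ∃ a ∈ e, a ∉ X)
    (l : ℕ) (hl : 2 ≤ l) (u : ℕ → V)
    (hedges : ∀ i < l, s(u i, u (i + 1)) ∈ ℰ)
    (hdist : ∀ i < l, ∀ j < l, s(u i, u (i + 1)) = s(u j, u (j + 1)) → i = j)
    (halt : ∀ i, i + 1 < l → Xor' (s(u i, u (i + 1)) ∈ Fh) (s(u (i + 1), u (i + 2)) ∈ Fh)) :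
    ∀ IX gamI ρ : Finset (Sym2 V),
      IX = ((Fh.filter (fun e => (∃ a ∈ e, a ∈ X) ∧ ∃ a ∈ e, a ∉ X)) \ η.toFinset) ∪
           (η.toFinset \ (Fh.filter (fun e => (∃ a ∈ e, a ∈ X) ∧ ∃ a ∈ e, a ∉ X))) →
      gamI = ℰ.filter (fun e => ∀ a ∈ e, a ∈ X) ∪ IX →
      ρ = (Finset.range l).image (fun i => s(u i, u (i + 1))) →
      (-1 : ℤ) ≤ ((ρ ∩ Fh ∩ gamI).card : ℤ) - (((ρ ∩ gamI) \ Fh).card : ℤ) ∧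
      (((ρ ∩ Fh ∩ gamI).card : ℤ) - (((ρ ∩ gamI) \ Fh).card : ℤ) = -1 →
        (∃ e ∈ η, e ∈ ρ) ∨ ∀ e ∈ ρ, e ∈ gamI) := by
  intro IX gamI ρ hIX hgamI hρ
  obtain ⟨f, hfi⟩ : ∃ f : ℕ → Sym2 V, ∀ i, f i = s(u i, u (i + 1)) :=
    ⟨fun i => s(u i, u (i + 1)), fun _ => rfl⟩
  have hρ' : ρ = (Finset.range l).image f := by
    rw [hρ]
    apply Finset.image_congr
    intro i _
    exact (hfi i).symm
  have hdist' : ∀ i < l, ∀ j < l, f i = f j → i = j := by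
    intro i hi j hj h
    apply hdist i hi j hj
    rw [← hfi i, ← hfi j]; exact h
  have halt' : ∀ i, i + 1 < l →
      ((f i ∈ Fh ∧ f (i + 1) ∉ Fh) ∨ (f (i + 1) ∈ Fh ∧ f i ∉ Fh)) := by
    intro i hi
    have h := halt i hi
    have e1 : f i = s(u i, u (i + 1)) := hfi i
    have e2 : f (i + 1) = s(u (i + 1), u (i + 2)) := hfi (i + 1)
    rw [← e1, ← e2] at h
    rcases h with ⟨h1, h2⟩ | ⟨h1, h2⟩
    · exact Or.inl ⟨h1, h2⟩
    · exact Or.inr ⟨h1, h2⟩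
  have hmemη : ∀ e : Sym2 V, e ∈ η.toFinset ↔ η = some e := by
    intro e; simp [Option.mem_toFinset, Option.mem_def]
  -- L1 : an edge of F̂ touching X which is not η lies in gamI
  have L1 : ∀ j, j < l → f j ∈ Fh → (u j ∈ X ∨ u (j + 1) ∈ X) → η ≠ some (f j) →
      f j ∈ gamI := by
    intro j hj hF htouch hne
    rw [hgamI]
    by_cases hboth : u j ∈ X ∧ u (j + 1) ∈ X
    · apply Finset.mem_union_left
      rw [Finset.mem_filter]
      refine ⟨by rw [hfi j]; exact hedges j hj, ?_⟩
      intro a ha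
      rw [hfi j, Sym2.mem_iff] at ha
      rcases ha with h | h
      · rw [h]; exact hboth.1
      · rw [h]; exact hboth.2
    · apply Finset.mem_union_right
      rw [hIX]
      apply Finset.mem_union_left
      rw [Finset.mem_sdiff, Finset.mem_filter]
      refine ⟨⟨hF, ?_, ?_⟩, ?_⟩
      · rcases htouch with h | h
        · exact ⟨u j, by rw [hfi j]; exact Sym2.mem_mk_left _ _, h⟩
        · exact ⟨u (j + 1), by rw [hfi j]; exact Sym2.mem_mk_right _ _, h⟩
      · rcases htouch with h | h
        · by_cases h2 : u (j + 1) ∈ X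
          · exact absurd ⟨h, h2⟩ hboth
          · exact ⟨u (j + 1), by rw [hfi j]; exact Sym2.mem_mk_right _ _, h2⟩
        · by_cases h2 : u j ∈ X
          · exact absurd ⟨h2, h⟩ hboth
          · exact ⟨u j, by rw [hfi j]; exact Sym2.mem_mk_left _ _, h2⟩
      · rw [hmemη]; exact hne
  -- L2 : characterisation of negative edges
  have L2 : ∀ j, j < l → f j ∈ gamI → f j ∉ Fh →
      (u j ∈ X ∧ u (j + 1) ∈ X) ∨ η = some (f j) := by
    intro j hj hg hF
    rw [hgamI, Finset.mem_union] at hg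
    rcases hg with hg | hg
    · rw [Finset.mem_filter] at hg
      refine Or.inl ⟨?_, ?_⟩
      · exact hg.2 (u j) (by rw [hfi j]; exact Sym2.mem_mk_left _ _)
      · exact hg.2 (u (j + 1)) (by rw [hfi j]; exact Sym2.mem_mk_right _ _)
    · rw [hIX, Finset.mem_union] at hg
      rcases hg with hg | hg
      · rw [Finset.mem_sdiff, Finset.mem_filter] at hg
        exact absurd hg.1.1 hF
      · rw [Finset.mem_sdiff, hmemη] at hg
        exact Or.inr hg.1
  -- Lη : η has an endpoint outside X
  have Lη : ∀ j, η = some (f j) → ¬(u j ∈ X ∧ u (j + 1) ∈ X) := by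
    rintro j hje ⟨h1, h2⟩
    obtain ⟨-, -, a, ha, haX⟩ := hη (f j) (Option.mem_def.mpr hje)
    rw [hfi j, Sym2.mem_iff] at ha
    rcases ha with h | h
    · rw [h] at haX; exact haX h1
    · rw [h] at haX; exact haX h2
  -- contributions and partial sums
  obtain ⟨c, hc⟩ : ∃ c : ℕ → ℤ,
      ∀ i, c i = if f i ∈ gamI then (if f i ∈ Fh then 1 else -1) else 0 :=
    ⟨fun i => if f i ∈ gamI then (if f i ∈ Fh then 1 else -1) else 0, fun _ => rfl⟩
  obtain ⟨S, hS0, hSs, hSl⟩ : ∃ S : ℕ → ℤ, S 0 = 0 ∧ (∀ k, S (k + 1) = S k + c k) ∧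
      S l = ∑ i ∈ Finset.range l, c i :=
    ⟨fun k => ∑ i ∈ Finset.range k, c i, by simp, fun k => Finset.sum_range_succ c k, rfl⟩
  have hcpos : ∀ i, f i ∈ gamI → f i ∈ Fh → c i = 1 := by
    intro i h1 h2; rw [hc]; simp [h1, h2]
  have hcneg : ∀ i, f i ∈ gamI → f i ∉ Fh → c i = -1 := by
    intro i h1 h2; rw [hc]; simp [h1, h2]
  have hczero : ∀ i, f i ∉ gamI → c i = 0 := by
    intro i h1; rw [hc]; simp [h1]
  -- The invariant
  have Inv : ∀ k, k < l →
      (-1 ≤ S (k + 1)) ∧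
      (S (k + 1) = -1 →
        (∃ j ≤ k, η = some (f j)) ∨ ((∀ j ≤ k, f j ∈ gamI) ∧ f k ∉ Fh)) ∧
      (f k ∈ gamI → f k ∈ Fh → 0 ≤ S (k + 1)) ∧
      (S (k + 1) = -1 → f k ∉ gamI → f k ∈ Fh →
        (∃ j ≤ k, η = some (f j)) ∧ u (k + 1) ∉ X) ∧
      (S (k + 1) = 0 → f k ∈ gamI → f k ∈ Fh →
        (∃ j ≤ k, η = some (f j)) ∨ (∀ j ≤ k, f j ∈ gamI)) := by
    intro k
    induction k with
    | zero =>
      intro h0l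
      have h1 : S (0 + 1) = c 0 := by rw [hSs, hS0]; ring
      by_cases hg : f 0 ∈ gamI
      · by_cases hF : f 0 ∈ Fh
        · have hcv := hcpos 0 hg hF
          exact ⟨by omega, by intro h; omega, by intro _ _; omega,
            by intro h; omega, by intro h _ _; omega⟩
        · have hcv := hcneg 0 hg hF
          refine ⟨by omega, ?_, by intro _ hF'; exact absurd hF' hF,
            by intro _ hg'; exact absurd hg hg', by intro h; omega⟩
          intro _
          refine Or.inr ⟨?_, hF⟩
          intro j hj
          have hj0 : j = 0 := Nat.le_zero.mp hj
          rw [hj0]; exact hg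
      · have hcv := hczero 0 hg
        exact ⟨by omega, by intro h; omega, by intro hg' _; exact absurd hg' hg,
          by intro h; omega, by intro _ hg' _; exact absurd hg' hg⟩
    | succ k ih =>
      intro hk1
      have hkl : k < l := Nat.lt_of_succ_lt hk1
      obtain ⟨A, B, C, D, E⟩ := ih hkl
      have hs := hSs (k + 1)
      by_cases hg : f (k + 1) ∈ gamI
      · by_cases hF : f (k + 1) ∈ Fh
        · -- positive edge
          have hcv := hcpos (k + 1) hg hF
          refine ⟨by omega, by intro h; omega, by intro _ _; omega,
            by intro _ hg' _; exact absurd hg hg', ?_⟩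
          intro h0 _ _
          have hSm : S (k + 1) = -1 := by omega
          rcases B hSm with ⟨j, hj, hje⟩ | ⟨hall, -⟩
          · exact Or.inl ⟨j, Nat.le_succ_of_le hj, hje⟩
          · refine Or.inr ?_
            intro j hj
            by_cases hjk : j ≤ k
            · exact hall j hjk
            · have hje : j = k + 1 := by omega
              rw [hje]; exact hg
        · -- negative edge
          have hcv := hcneg (k + 1) hg hF
          have hFk : f k ∈ Fh := by
            rcases halt' k hk1 with ⟨h1, -⟩ | ⟨h1, -⟩
            · exact h1
            · exact absurd h1 hF
          have hSnn : 0 ≤ S (k + 1) := by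
            by_contra hcon
            have hSm : S (k + 1) = -1 := by omega
            by_cases hgk : f k ∈ gamI
            · exact hcon (C hgk hFk)
            · obtain ⟨⟨j, hj, hje⟩, hu⟩ := D hSm hgk hFk
              rcases L2 (k + 1) hk1 hg hF with ⟨h1, -⟩ | hη2
              · exact hu h1
              · have hfj : f j = f (k + 1) := Option.some.inj (hje.symm.trans hη2)
                have := hdist' j (Nat.lt_of_le_of_lt hj hkl) (k + 1) hk1 hfj
                omega
          refine ⟨by omega, ?_, by intro _ hF'; exact absurd hF' hF,
            by intro _ hg' _; exact absurd hg hg', by intro _ _ hF'; exact absurd hF' hF⟩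
          intro h
          have hS0' : S (k + 1) = 0 := by omega
          by_cases hgk : f k ∈ gamI
          · rcases E hS0' hgk hFk with ⟨j, hj, hje⟩ | hall
            · exact Or.inl ⟨j, Nat.le_succ_of_le hj, hje⟩
            · refine Or.inr ⟨?_, hF⟩
              intro j hj
              by_cases hjk : j ≤ k
              · exact hall j hjk
              · have hje : j = k + 1 := by omega
                rw [hje]; exact hg
          · rcases L2 (k + 1) hk1 hg hF with ⟨h1, -⟩ | hη2
            · by_cases hηk : η = some (f k)
              · exact Or.inl ⟨k, Nat.le_succ k, hηk⟩
              · exact absurd (L1 k hkl hFk (Or.inr h1) hηk) hgk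
            · exact Or.inl ⟨k + 1, le_refl _, hη2⟩
      · -- zero edge
        have hcv := hczero (k + 1) hg
        refine ⟨by omega, ?_, by intro hg' _; exact absurd hg' hg, ?_,
          by intro _ hg' _; exact absurd hg' hg⟩
        · -- B'
          intro h
          have hSm : S (k + 1) = -1 := by omega
          rcases B hSm with ⟨j, hj, hje⟩ | ⟨hall, hFk⟩
          · exact Or.inl ⟨j, Nat.le_succ_of_le hj, hje⟩
          · have hgk : f k ∈ gamI := hall k (le_refl k)
            rcases L2 k hkl hgk hFk with ⟨-, h2⟩ | hηk
            · have hF1 : f (k + 1) ∈ Fh := by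
                rcases halt' k hk1 with ⟨h3, -⟩ | ⟨h3, -⟩
                · exact absurd h3 hFk
                · exact h3
              by_cases hη1 : η = some (f (k + 1))
              · exact Or.inl ⟨k + 1, le_refl _, hη1⟩
              · exact absurd (L1 (k + 1) hk1 hF1 (Or.inl h2) hη1) hg
            · exact Or.inl ⟨k, Nat.le_succ k, hηk⟩
        · -- D'
          intro h hg' hF1
          have hFk : f k ∉ Fh := by
            rcases halt' k hk1 with ⟨-, h3⟩ | ⟨-, h3⟩
            · exact absurd hF1 h3
            · exact h3
          have hSm : S (k + 1) = -1 := by omega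
          by_cases hgk : f k ∈ gamI
          · rcases L2 k hkl hgk hFk with ⟨-, h2⟩ | hηk
            · by_cases hη1 : η = some (f (k + 1))
              · refine ⟨⟨k + 1, le_refl _, hη1⟩, ?_⟩
                intro hc2
                exact Lη (k + 1) hη1 ⟨h2, hc2⟩
              · exact absurd (L1 (k + 1) hk1 hF1 (Or.inl h2) hη1) hg
            · refine ⟨⟨k, Nat.le_succ k, hηk⟩, ?_⟩
              intro hc2
              by_cases hη1 : η = some (f (k + 1))
              · have hfj : f k = f (k + 1) := Option.some.inj (hηk.symm.trans hη1)
                have := hdist' k hkl (k + 1) hk1 hfj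
                omega
              · exact absurd (L1 (k + 1) hk1 hF1 (Or.inr hc2) hη1) hg
          · rcases B hSm with ⟨j, hj, hje⟩ | ⟨hall, -⟩
            · refine ⟨⟨j, Nat.le_succ_of_le hj, hje⟩, ?_⟩
              intro hc2
              by_cases hη1 : η = some (f (k + 1))
              · have hfj : f j = f (k + 1) := Option.some.inj (hje.symm.trans hη1)
                have := hdist' j (Nat.lt_of_le_of_lt hj hkl) (k + 1) hk1 hfj
                omega
              · exact absurd (L1 (k + 1) hk1 hF1 (Or.inr hc2) hη1) hg
            · exact absurd (hall k (le_refl k)) hgk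
  -- convert cardinalities to the sum
  have hfilter : ∀ A : Finset (Sym2 V), (ρ ∩ A).card =
      ((Finset.range l).filter (fun i => f i ∈ A)).card := by
    intro A
    have himg : ρ ∩ A = ((Finset.range l).filter (fun i => f i ∈ A)).image f := by
      ext e
      simp only [hρ', Finset.mem_inter, Finset.mem_image, Finset.mem_filter,
        Finset.mem_range]
      constructor
      · rintro ⟨⟨i, hi, rfl⟩, hp⟩
        exact ⟨i, ⟨hi, hp⟩, rfl⟩
      · rintro ⟨i, ⟨hi, hp⟩, rfl⟩
        exact ⟨⟨i, hi, rfl⟩, hp⟩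
    rw [himg]
    apply Finset.card_image_of_injOn
    intro i hi j hj hij
    simp only [Finset.coe_filter, Set.mem_setOf_eq, Finset.mem_range] at hi hj
    exact hdist' i hi.1 j hj.1 hij
  have e1 : ρ ∩ Fh ∩ gamI = ρ ∩ (Fh ∩ gamI) := by
    rw [Finset.inter_assoc]
  have e2 : (ρ ∩ gamI) \ Fh = ρ ∩ (gamI \ Fh) := by
    ext e
    simp only [Finset.mem_inter, Finset.mem_sdiff]
    tauto
  have key : ((ρ ∩ Fh ∩ gamI).card : ℤ) - (((ρ ∩ gamI) \ Fh).card : ℤ) = S l := by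
    rw [e1, e2, hfilter, hfilter, hSl, Finset.card_filter, Finset.card_filter]
    push_cast
    rw [← Finset.sum_sub_distrib]
    apply Finset.sum_congr rfl
    intro i _
    rw [hc]
    by_cases h1 : f i ∈ gamI <;> by_cases h2 : f i ∈ Fh <;>
      simp [h1, h2, Finset.mem_inter, Finset.mem_sdiff]
  have hlm : l - 1 < l := by omega
  obtain ⟨A, B, -, -, -⟩ := Inv (l - 1) hlm
  have hl1 : l - 1 + 1 = l := by omega
  rw [hl1] at A B
  constructor
  · rw [key]; exact A
  · intro heq
    rw [key] at heq
    rcases B heq with ⟨j, hj, hje⟩ | ⟨hall, -⟩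
    · left
      refine ⟨f j, Option.mem_def.mpr hje, ?_⟩
      rw [hρ']
      exact Finset.mem_image_of_mem f (Finset.mem_range.mpr (by omega))
    · right
      intro e he
      rw [hρ'] at he
      obtain ⟨i, hi, rfl⟩ := Finset.mem_image.mp he
      exact hall i (by simp only [Finset.mem_range] at hi; omega)
end

section
/- Let F̂ be an edge set of a finite simple graph, X a vertex set, η(X) either null or an edge of δ(X), and I(X) := δ_{F̂}(X) △ {η(X)}. Let ρ be an alternating walk with respect to F̂ of length at least 2 such that neither of the two terminal edges of ρ belongs to (γ(X) ∪ I(X)) \ F̂. Then Diff(ρ, X, F̂) ≥ 0. -/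
open Finset
open scoped Classical

/-- Auxiliary "chain" predicate: starting at `i`, every second position is a
"bad" edge (in `gamI` but not `Fh`), ending at a position whose right neighbour
is not in `gamI`. -/
abbrev AuxChain {α : Type*} [DecidableEq α] (Fh gamI : Finset α) (l : ℕ) (E : ℕ → α) (i : ℕ) : Prop :=
  ∃ k, (∀ t ≤ k, i + 2*t < l ∧ (E (i + 2*t) ∈ gamI ∧ E (i + 2*t) ∉ Fh)) ∧ E (i + 2*k + 1) ∉ gamI

theorem aux_card {α : Type*} [DecidableEq α] (Fh gamI : Finset α) (η : Option α)
    (l : ℕ) (E : ℕ → α) (P : ℕ → Prop)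
    (injE : ∀ i < l, ∀ j < l, E i = E j → i = j)
    (halt : ∀ i, i + 1 < l → Xor' (E i ∈ Fh) (E (i+1) ∈ Fh))
    (classify : ∀ i, i < l → E i ∈ gamI → E i ∉ Fh → (P i ∧ P (i+1)) ∨ E i ∈ η)
    (absorb : ∀ i, i < l → E i ∈ Fh → (P i ∨ P (i+1)) → E i ∉ gamI → E i ∈ η)
    (hδ : ∀ i, i < l → E i ∈ η → P i ∨ P (i+1))
    (h0 : ¬(E 0 ∈ gamI ∧ E 0 ∉ Fh))
    (hl1 : ¬(E (l-1) ∈ gamI ∧ E (l-1) ∉ Fh)) :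
    ((range l).filter (fun i => E i ∈ gamI ∧ E i ∉ Fh)).card ≤
    ((range l).filter (fun i => E i ∈ gamI ∧ E i ∈ Fh)).card := by
  have haltR : ∀ i, i + 1 < l → E i ∉ Fh → E (i+1) ∈ Fh := by
    intro i hi h
    rcases (halt i hi : (E i ∈ Fh ∧ E (i+1) ∉ Fh) ∨ (E (i+1) ∈ Fh ∧ E i ∉ Fh)) with ⟨h1, _⟩ | ⟨h1, _⟩
    · exact absurd h1 h
    · exact h1
  have haltL : ∀ i, i + 1 < l → E (i+1) ∉ Fh → E i ∈ Fh := by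
    intro i hi h
    rcases (halt i hi : (E i ∈ Fh ∧ E (i+1) ∉ Fh) ∨ (E (i+1) ∈ Fh ∧ E i ∉ Fh)) with ⟨h1, _⟩ | ⟨h1, _⟩
    · exact h1
    · exact absurd h1 h
  have hbad1 : ∀ i, i < l → E i ∈ gamI → E i ∉ Fh → 1 ≤ i ∧ i + 1 < l := by
    intro i hi hg hF
    constructor
    · by_contra h
      have hi0 : i = 0 := by omega
      subst hi0
      exact h0 ⟨hg, hF⟩
    · by_contra h
      have hil : i = l - 1 := by omega
      subst hil
      exact hl1 ⟨hg, hF⟩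
  have htag : ∀ j, j < l → E j ∈ gamI → E j ∉ Fh → E (j+1) ∉ gamI →
      (E (j+1) ∈ η ∨ E j ∈ η) := by
    intro j hj hg hF hb
    rcases classify j hj hg hF with ⟨_, hp2⟩ | hm
    · have hj2 := (hbad1 j hj hg hF).2
      exact Or.inl (absorb (j+1) hj2 (haltR j hj2 hF) (Or.inl hp2) hb)
    · exact Or.inr hm
  have hleft : ∀ i, i < l → E i ∈ gamI → E i ∉ Fh → AuxChain Fh gamI l E i →
      E (i-1) ∈ gamI ∧ E (i-1) ∈ Fh := by
    intro i hi hg hF hch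
    obtain ⟨k, hk, hkb⟩ := hch
    obtain ⟨hi1, hi2⟩ := hbad1 i hi hg hF
    obtain ⟨i', rfl⟩ : ∃ i', i = i' + 1 := ⟨i - 1, by omega⟩
    simp only [Nat.add_sub_cancel]
    have hj0 := hk k le_rfl
    have hj0' := hbad1 _ hj0.1 hj0.2.1 hj0.2.2
    have htagj := htag _ hj0.1 hj0.2.1 hj0.2.2 hkb
    have hFprev : E i' ∈ Fh := haltL i' hi hF
    refine ⟨?_, hFprev⟩
    by_contra hno
    rcases classify (i'+1) hi hg hF with ⟨hp1, _⟩ | hmem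
    · have hηprev : E i' ∈ η := absorb i' (by omega) hFprev (Or.inr hp1) hno
      rcases htagj with h1 | h2
      · have heq : E i' = E (i'+1+2*k+1) := Option.mem_unique hηprev h1
        have := injE i' (by omega) (i'+1+2*k+1) hj0'.2 heq
        omega
      · exact hj0.2.2 ((Option.mem_unique hηprev h2) ▸ hFprev)
    · rcases hδ (i'+1) hi hmem with hp | hp
      · have hηprev : E i' ∈ η := absorb i' (by omega) hFprev (Or.inr hp) hno
        have heq : E i' = E (i'+1) := Option.mem_unique hηprev hmem
        exact hF (heq ▸ hFprev)
      · rcases htagj with h1 | h2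
        · have heq : E (i'+1) = E (i'+1+2*k+1) := Option.mem_unique hmem h1
          have := injE (i'+1) hi (i'+1+2*k+1) hj0'.2 heq
          omega
        · have heq : E (i'+1) = E (i'+1+2*k) := Option.mem_unique hmem h2
          have hk0 : k = 0 := by
            have := injE (i'+1) hi (i'+1+2*k) hj0.1 heq
            omega
          subst hk0
          have hkb' : E (i'+1+1) ∉ gamI := by simpa using hkb
          have hF2 : E (i'+1+1) ∈ Fh := haltR (i'+1) hi2 hF
          have hη2 : E (i'+1+1) ∈ η := absorb (i'+1+1) hi2 hF2 (Or.inl hp) hkb'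
          have heq2 : E (i'+1+1) = E (i'+1) := Option.mem_unique hη2 hmem
          exact hF (heq2 ▸ hF2)
  have hright : ∀ i, i < l → E i ∈ gamI → E i ∉ Fh → ¬ AuxChain Fh gamI l E i →
      E (i+1) ∈ gamI ∧ E (i+1) ∈ Fh := by
    intro i hi hg hF hch
    have hi2 := (hbad1 i hi hg hF).2
    refine ⟨?_, haltR i hi2 hF⟩
    by_contra hb
    refine hch ⟨0, ?_, by simpa using hb⟩
    intro t ht
    have ht0 : t = 0 := Nat.le_zero.mp ht
    subst ht0
    simpa using ⟨hi, hg, hF⟩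
  have hshift : ∀ i, i < l → E i ∈ gamI → E i ∉ Fh → AuxChain Fh gamI l E (i+2) →
      AuxChain Fh gamI l E i := by
    intro i hi hg hF hch
    obtain ⟨k, hk, hb⟩ := hch
    refine ⟨k+1, ?_, ?_⟩
    · intro t ht
      match t with
      | 0 => simpa using ⟨hi, hg, hF⟩
      | Nat.succ t' =>
        have h := hk t' (by omega)
        have harith : i + 2*(t'+1) = i + 2 + 2*t' := by ring
        rw [harith]
        exact h
    · have harith : i + 2*(k+1) + 1 = i + 2 + 2*k + 1 := by ring
      rw [harith]
      exact hb
  apply Finset.card_le_card_of_injOn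
    (fun i => if AuxChain Fh gamI l E i then i - 1 else i + 1)
  · intro i hi
    rw [Finset.mem_coe, Finset.mem_filter, Finset.mem_range] at hi
    obtain ⟨hil, hig, hiF⟩ := hi
    have h1 := (hbad1 i hil hig hiF).1
    have h2 := (hbad1 i hil hig hiF).2
    try dsimp only
    rw [Finset.mem_coe, Finset.mem_filter, Finset.mem_range]
    by_cases hc : AuxChain Fh gamI l E i
    · rw [if_pos hc]
      exact ⟨by omega, hleft i hil hig hiF hc⟩
    · rw [if_neg hc]
      exact ⟨h2, hright i hil hig hiF hc⟩
  · intro i hi j hj hij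
    rw [Finset.mem_coe, Finset.mem_filter, Finset.mem_range] at hi hj
    obtain ⟨hil, hig, hiF⟩ := hi
    obtain ⟨hjl, hjg, hjF⟩ := hj
    have h1i := (hbad1 i hil hig hiF).1
    have h1j := (hbad1 j hjl hjg hjF).1
    try dsimp only at hij
    by_cases hci : AuxChain Fh gamI l E i
    · rw [if_pos hci] at hij
      by_cases hcj : AuxChain Fh gamI l E j
      · rw [if_pos hcj] at hij; omega
      · rw [if_neg hcj] at hij
        have hji : i = j + 2 := by omega
        rw [hji] at hci
        exact absurd (hshift j hjl hjg hjF hci) hcj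
    · rw [if_neg hci] at hij
      by_cases hcj : AuxChain Fh gamI l E j
      · rw [if_pos hcj] at hij
        have hji : j = i + 2 := by omega
        rw [hji] at hcj
        exact absurd (hshift i hil hig hiF hcj) hci
      · rw [if_neg hcj] at hij; omega

/-- Let `F̂` be an edge set, `X` a vertex set, `η(X)` null or
an edge of `δ(X)`, and `I(X) = δ_{F̂}(X) △ {η(X)}`.  If `ρ` is an alternating
walk (with respect to `F̂`, pairwise distinct edges) of length at least 2 such
that neither terminal edge of `ρ` belongs to `(γ(X) ∪ I(X)) \ F̂`, then
`Diff(ρ, X, F̂) ≥ 0`. -/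
theorem stmt_6 {V : Type*} [Fintype V] [DecidableEq V]
    (ℰ : Finset (Sym2 V)) (hE : ∀ e ∈ ℰ, ¬ e.IsDiag)
    (Fh : Finset (Sym2 V)) (hFh : Fh ⊆ ℰ)
    (X : Finset V) (η : Option (Sym2 V))
    (hη : ∀ e ∈ η, e ∈ ℰ ∧ (∃ a ∈ e, a ∈ X) ∧ ∃ a ∈ e, a ∉ X)
    (l : ℕ) (hl : 2 ≤ l) (u : ℕ → V)
    (hedges : ∀ i < l, s(u i, u (i + 1)) ∈ ℰ)
    (hdist : ∀ i < l, ∀ j < l, s(u i, u (i + 1)) = s(u j, u (j + 1)) → i = j)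
    (halt : ∀ i, i + 1 < l → Xor' (s(u i, u (i + 1)) ∈ Fh) (s(u (i + 1), u (i + 2)) ∈ Fh)) :
    ∀ IX gamI ρ : Finset (Sym2 V),
      IX = ((Fh.filter (fun e => (∃ a ∈ e, a ∈ X) ∧ ∃ a ∈ e, a ∉ X)) \ η.toFinset) ∪
           (η.toFinset \ (Fh.filter (fun e => (∃ a ∈ e, a ∈ X) ∧ ∃ a ∈ e, a ∉ X))) →
      gamI = ℰ.filter (fun e => ∀ a ∈ e, a ∈ X) ∪ IX →
      ρ = (Finset.range l).image (fun i => s(u i, u (i + 1))) →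
      s(u 0, u 1) ∉ gamI \ Fh →
      s(u (l - 1), u l) ∉ gamI \ Fh →
      (0 : ℤ) ≤ ((ρ ∩ Fh ∩ gamI).card : ℤ) - (((ρ ∩ gamI) \ Fh).card : ℤ) := by
  intro IX gamI ρ hIX hgam hρ h0 hl1
  -- basic structural facts about `gamI`
  have factA : ∀ s, s ∈ gamI → s ∉ Fh → (∀ a ∈ s, a ∈ X) ∨ s ∈ η := by
    intro s hs hsF
    rw [hgam, Finset.mem_union] at hs
    rcases hs with h | h
    · exact Or.inl (Finset.mem_filter.mp h).2
    · rw [hIX, Finset.mem_union] at h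
      rcases h with h | h
      · exact absurd (Finset.mem_filter.mp (Finset.mem_sdiff.mp h).1).1 hsF
      · exact Or.inr (Option.mem_toFinset.mp (Finset.mem_sdiff.mp h).1)
  have factB : ∀ s, s ∈ Fh → (∃ a ∈ s, a ∈ X) → s ∉ gamI → s ∈ η := by
    intro s hsF hsX hs
    have hnot : ¬ ∀ a ∈ s, a ∈ X := by
      intro hall
      exact hs (by
        rw [hgam]
        exact Finset.mem_union_left _ (Finset.mem_filter.mpr ⟨hFh hsF, hall⟩))
    push_neg at hnot
    by_contra hne
    apply hs
    rw [hgam]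
    refine Finset.mem_union_right _ ?_
    rw [hIX]
    refine Finset.mem_union_left _ (Finset.mem_sdiff.mpr
      ⟨Finset.mem_filter.mpr ⟨hsF, hsX, hnot⟩, ?_⟩)
    intro hmem
    exact hne (Option.mem_toFinset.mp hmem)
  have classify' : ∀ i, i < l → s(u i, u (i+1)) ∈ gamI → s(u i, u (i+1)) ∉ Fh →
      ((u i ∈ X) ∧ (u (i+1) ∈ X)) ∨ s(u i, u (i+1)) ∈ η := by
    intro i _ hg hF
    rcases factA _ hg hF with hall | hm
    · exact Or.inl ⟨hall _ (Sym2.mem_mk_left _ _), hall _ (Sym2.mem_mk_right _ _)⟩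
    · exact Or.inr hm
  have absorb' : ∀ i, i < l → s(u i, u (i+1)) ∈ Fh → (u i ∈ X ∨ u (i+1) ∈ X) →
      s(u i, u (i+1)) ∉ gamI → s(u i, u (i+1)) ∈ η := by
    intro i _ hF hP hg
    refine factB _ hF ?_ hg
    rcases hP with h | h
    · exact ⟨u i, Sym2.mem_mk_left _ _, h⟩
    · exact ⟨u (i+1), Sym2.mem_mk_right _ _, h⟩
  have hδ' : ∀ i, i < l → s(u i, u (i+1)) ∈ η → u i ∈ X ∨ u (i+1) ∈ X := by
    intro i _ hm
    obtain ⟨-, ⟨a, ha, haX⟩, -⟩ := hη _ hm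
    rcases Sym2.mem_iff.mp ha with rfl | rfl
    · exact Or.inl haX
    · exact Or.inr haX
  have h0' : ¬(s(u 0, u (0+1)) ∈ gamI ∧ s(u 0, u (0+1)) ∉ Fh) := by
    rintro ⟨a, b⟩
    exact h0 (Finset.mem_sdiff.mpr ⟨a, b⟩)
  have hl1' : ¬(s(u (l-1), u (l-1+1)) ∈ gamI ∧ s(u (l-1), u (l-1+1)) ∉ Fh) := by
    rintro ⟨a, b⟩
    rw [show l - 1 + 1 = l from by omega] at a b
    exact hl1 (Finset.mem_sdiff.mpr ⟨a, b⟩)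
  have key := aux_card Fh gamI η l (fun i => s(u i, u (i+1))) (fun i => u i ∈ X)
    hdist halt classify' absorb' hδ' h0' hl1'
  -- translate between edge sets and index sets
  have hinj : ∀ (A : Finset ℕ), A ⊆ range l →
      (A.image (fun i => s(u i, u (i+1)))).card = A.card := by
    intro A hA
    refine Finset.card_image_of_injOn ?_
    intro i hi j hj hij
    exact hdist i (Finset.mem_range.mp (hA hi)) j (Finset.mem_range.mp (hA hj)) hij
  have h1 : ρ ∩ Fh ∩ gamI =
      ((range l).filter (fun i => s(u i, u (i+1)) ∈ gamI ∧ s(u i, u (i+1)) ∈ Fh)).image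
        (fun i => s(u i, u (i+1))) := by
    ext s
    simp only [hρ, Finset.mem_inter, Finset.mem_image, Finset.mem_filter, Finset.mem_range]
    constructor
    · rintro ⟨⟨⟨i, hil, rfl⟩, hsF⟩, hsg⟩
      exact ⟨i, ⟨hil, hsg, hsF⟩, rfl⟩
    · rintro ⟨i, ⟨hil, hsg, hsF⟩, rfl⟩
      exact ⟨⟨⟨i, hil, rfl⟩, hsF⟩, hsg⟩
  have h2 : (ρ ∩ gamI) \ Fh =
      ((range l).filter (fun i => s(u i, u (i+1)) ∈ gamI ∧ s(u i, u (i+1)) ∉ Fh)).image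
        (fun i => s(u i, u (i+1))) := by
    ext s
    simp only [hρ, Finset.mem_sdiff, Finset.mem_inter, Finset.mem_image, Finset.mem_filter,
      Finset.mem_range]
    constructor
    · rintro ⟨⟨⟨i, hil, rfl⟩, hsg⟩, hsF⟩
      exact ⟨i, ⟨hil, hsg, hsF⟩, rfl⟩
    · rintro ⟨i, ⟨hil, hsg, hsF⟩, rfl⟩
      exact ⟨⟨⟨i, hil, rfl⟩, hsg⟩, hsF⟩
  beta_reduce at key
  rw [h1, h2, hinj _ (Finset.filter_subset _ _), hinj _ (Finset.filter_subset _ _)]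
  omega
end

section
/- Let F₀ and F be f-factors of the blowup graph 𝒢, and let e_u be an auxiliary vertex whose two incident edges are η=(u,e_u) and ζ=(e_u,e_v). Let 𝒲 be a family of pairwise edge-disjoint augmenting walks of F₀⊕F, i.e., alternating walks with respect to F all of whose edges lie in F₀⊕F and whose two terminal edges are not in F. Then at most one walk ρ∈𝒲 satisfies ρ ∩ {η, ζ} ≠ ∅. -/
open Finset
open scoped Classical

/-- In the blowup graph, let `F₀, F` be `f`-factors and let
`e_u` be an auxiliary vertex (so `f(e_u) = 1`) whose two incident edges are
`η = (u, e_u)` and `ζ = (e_u, e_v)`.  For any family of pairwise edge-disjoint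
augmenting walks of `F₀ ⊕ F` (alternating walks with respect to `F` whose
edges lie in `F₀ ⊕ F` and whose terminal edges are not in `F`), at most one
walk of the family meets `{η, ζ}`. -/
theorem stmt_7 {V : Type*} [Fintype V] [DecidableEq V]
    (ℰ : Finset (Sym2 V)) (hE : ∀ e ∈ ℰ, ¬ e.IsDiag)
    (orig : Set V) (f : V → ℕ)
    (F F₀ : Finset (Sym2 V)) (hFE : F ⊆ ℰ) (hF₀E : F₀ ⊆ ℰ)
    (hFfac : ∀ v : V, (F.filter (fun e => v ∈ e)).card ≤ f v)
    (hF₀fac : ∀ v : V, (F₀.filter (fun e => v ∈ e)).card ≤ f v)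
    (u eu ev : V) (heu : eu ∉ orig) (hfeu : f eu = 1)
    (hinc : ℰ.filter (fun e => eu ∈ e) = {s(u, eu), s(eu, ev)})
    (ι : Type*) (len : ι → ℕ) (w : ι → ℕ → V)
    (hlen : ∀ i, 1 ≤ len i)
    (hedges : ∀ i, ∀ j < len i, s(w i j, w i (j + 1)) ∈ (F₀ \ F) ∪ (F \ F₀))
    (hdist : ∀ i, ∀ j < len i, ∀ k < len i,
      s(w i j, w i (j + 1)) = s(w i k, w i (k + 1)) → j = k)
    (halt : ∀ i, ∀ j, j + 1 < len i →
      Xor' (s(w i j, w i (j + 1)) ∈ F) (s(w i (j + 1), w i (j + 2)) ∈ F))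
    (hterm : ∀ i, s(w i 0, w i 1) ∉ F ∧ s(w i (len i - 1), w i (len i)) ∉ F)
    (hdisj : ∀ i j, i ≠ j →
      Disjoint ((Finset.range (len i)).image fun k => s(w i k, w i (k + 1)))
        ((Finset.range (len j)).image fun k => s(w j k, w j (k + 1)))) :
    ∀ i j : ι,
      (∃ e ∈ (Finset.range (len i)).image fun k => s(w i k, w i (k + 1)),
        e = s(u, eu) ∨ e = s(eu, ev)) →
      (∃ e ∈ (Finset.range (len j)).image fun k => s(w j k, w j (k + 1)),
        e = s(u, eu) ∨ e = s(eu, ev)) →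
      i = j := by

  -- every walk edge lies in ℰ
  have hsub : ∀ e ∈ (F₀ \ F) ∪ (F \ F₀), e ∈ ℰ := by
    intro e he
    rcases Finset.mem_union.1 he with h | h
    · exact hF₀E (Finset.mem_sdiff.1 h).1
    · exact hFE (Finset.mem_sdiff.1 h).1
  -- key lemma: if a walk contains an F-edge `a` incident to eu, it also contains `b`
  have key : ∀ (a b : Sym2 V), ℰ.filter (fun e => eu ∈ e) = {a, b} →
      a ∈ F → ∀ i, ∀ k, k < len i → s(w i k, w i (k+1)) = a →
      ∃ k', k' < len i ∧ s(w i k', w i (k'+1)) = b := by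
    intro a b hab haF i k hk hka
    have heua : eu ∈ a := by
      have ha : a ∈ ℰ.filter (fun e => eu ∈ e) := by rw [hab]; simp
      exact (Finset.mem_filter.1 ha).2
    have heuw : eu = w i k ∨ eu = w i (k+1) := by
      rw [← hka] at heua
      simpa [Sym2.mem_iff] using heua
    rcases heuw with h | h
    · have hk0 : k ≠ 0 := by
        intro h0
        subst h0
        exact (hterm i).1 (hka ▸ haF)
      obtain ⟨k', rfl⟩ : ∃ k', k = k' + 1 :=
        ⟨k - 1, (Nat.succ_pred_eq_of_ne_zero hk0).symm⟩
      have hk' : k' < len i := by omega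
      have hmem : s(w i k', w i (k'+1)) ∈ ℰ.filter (fun e => eu ∈ e) := by
        refine Finset.mem_filter.2 ⟨hsub _ (hedges i k' hk'), ?_⟩
        rw [Sym2.mem_iff]; right; exact h
      rw [hab] at hmem
      have hor : s(w i k', w i (k'+1)) = a ∨ s(w i k', w i (k'+1)) = b := by
        simpa using hmem
      rcases hor with hca | hcb
      · exact absurd (hdist i k' hk' (k'+1) hk (hca.trans hka.symm)) (by omega)
      · exact ⟨k', hk', hcb⟩
    · have hklt : k + 1 < len i := by
        rcases Nat.lt_or_ge (k+1) (len i) with h1 | h1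
        · exact h1
        · exfalso
          have hkeq : k = len i - 1 := by omega
          subst hkeq
          have heq : len i - 1 + 1 = len i := Nat.sub_add_cancel (hlen i)
          rw [heq] at hka
          exact (hterm i).2 (hka ▸ haF)
      have hmem : s(w i (k+1), w i (k+2)) ∈ ℰ.filter (fun e => eu ∈ e) := by
        refine Finset.mem_filter.2 ⟨hsub _ (hedges i (k+1) hklt), ?_⟩
        rw [Sym2.mem_iff]; left; exact h
      rw [hab] at hmem
      have hor : s(w i (k+1), w i (k+2)) = a ∨ s(w i (k+1), w i (k+2)) = b := by
        simpa using hmem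
      rcases hor with hca | hcb
      · exact absurd (hdist i (k+1) hklt k hk (hca.trans hka.symm)) (by omega)
      · exact ⟨k+1, hklt, hcb⟩
  -- main argument: walk i contains η, walk j contains ζ, i ≠ j → False
  have main : ∀ i j : ι, i ≠ j → ∀ ki, ki < len i →
      s(w i ki, w i (ki+1)) = s(u, eu) → ∀ kj, kj < len j →
      s(w j kj, w j (kj+1)) = s(eu, ev) → s(u, eu) ≠ s(eu, ev) → False := by
    intro i j hij ki hki hηi kj hkj hζj hηζ
    have hdis := hdisj i j hij
    by_cases hηF : s(u, eu) ∈ F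
    · obtain ⟨k', hk', hck'⟩ := key _ _ hinc hηF i ki hki hηi
      have h1 : s(eu, ev) ∈ (Finset.range (len i)).image fun k => s(w i k, w i (k+1)) :=
        Finset.mem_image.2 ⟨k', Finset.mem_range.2 hk', hck'⟩
      have h2 : s(eu, ev) ∈ (Finset.range (len j)).image fun k => s(w j k, w j (k+1)) :=
        Finset.mem_image.2 ⟨kj, Finset.mem_range.2 hkj, hζj⟩
      exact Finset.disjoint_left.1 hdis h1 h2
    · have hηF₀ : s(u, eu) ∈ F₀ := by
        have hm := hedges i ki hki
        rw [hηi] at hm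
        rcases Finset.mem_union.1 hm with h | h
        · exact (Finset.mem_sdiff.1 h).1
        · exact absurd (Finset.mem_sdiff.1 h).1 hηF
      by_cases hζF : s(eu, ev) ∈ F
      · have hinc' : ℰ.filter (fun e => eu ∈ e) = {s(eu, ev), s(u, eu)} := by
          rw [hinc, Finset.pair_comm]
        obtain ⟨k', hk', hck'⟩ := key _ _ hinc' hζF j kj hkj hζj
        have h1 : s(u, eu) ∈ (Finset.range (len j)).image fun k => s(w j k, w j (k+1)) :=
          Finset.mem_image.2 ⟨k', Finset.mem_range.2 hk', hck'⟩
        have h2 : s(u, eu) ∈ (Finset.range (len i)).image fun k => s(w i k, w i (k+1)) :=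
          Finset.mem_image.2 ⟨ki, Finset.mem_range.2 hki, hηi⟩
        exact Finset.disjoint_left.1 hdis h2 h1
      · -- both η, ζ ∈ F₀ : degree contradiction at eu
        have hζF₀ : s(eu, ev) ∈ F₀ := by
          have hm := hedges j kj hkj
          rw [hζj] at hm
          rcases Finset.mem_union.1 hm with h | h
          · exact (Finset.mem_sdiff.1 h).1
          · exact absurd (Finset.mem_sdiff.1 h).1 hζF
        have hpair : ({s(u, eu), s(eu, ev)} : Finset (Sym2 V)) ⊆
            F₀.filter (fun e => eu ∈ e) := by
          intro x hx
          rcases Finset.mem_insert.1 hx with rfl | hx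
          · exact Finset.mem_filter.2 ⟨hηF₀, by simp⟩
          · rw [Finset.mem_singleton.1 hx]
            exact Finset.mem_filter.2 ⟨hζF₀, by simp⟩
        have hc := Finset.card_le_card hpair
        rw [Finset.card_pair hηζ] at hc
        have hd := hF₀fac eu
        rw [hfeu] at hd
        omega
  intro i j hi hj
  by_contra hij
  obtain ⟨ei, hei, heiv⟩ := hi
  obtain ⟨ej, hej, hejv⟩ := hj
  have hne : ei ≠ ej := by
    intro h
    subst h
    exact Finset.disjoint_left.1 (hdisj i j hij) hei hej
  obtain ⟨ki, hki, hei'⟩ := Finset.mem_image.1 hei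
  obtain ⟨kj, hkj, hej'⟩ := Finset.mem_image.1 hej
  rw [Finset.mem_range] at hki hkj
  rcases heiv with rfl | rfl <;> rcases hejv with rfl | rfl
  · exact hne rfl
  · exact main i j hij ki hki hei' kj hkj hej' hne
  · exact main j i (Ne.symm hij) kj hkj hej' ki hki hei' hne.symm
  · exact hne rfl
end

section
/- Let F be an f-factor of the blowup graph 𝒢 and let X ⊆ 𝒱 satisfy: (a) every edge of δ(X) joins an original vertex in X to an auxiliary vertex outside X; (b) X contains at most one F-unsaturated vertex, and if η(X) is not null then every vertex of X is F-saturated; here η(X) is either null or an edge of δ(X), and I(X) := δ_F(X) △ {η(X)}. Then there is at most one F-unsaturated vertex u of 𝒢 such that u ∈ X or u is an endpoint of some edge of γ(X) ∪ I(X). -/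
open Finset
open scoped Classical

/-- In the blowup graph, let `F` be an `f`-factor and let
`X ⊆ 𝒱` satisfy: (a) every edge of `δ(X)` joins an original vertex in `X` to
an auxiliary vertex outside `X`; (b) `X` contains at most one `F`-unsaturated
vertex, and if `η(X)` is not null then every vertex of `X` is `F`-saturated;
with `η(X)` null or an edge of `δ(X)` and `I(X) = δ_F(X) △ {η(X)}`.  Then
there is at most one `F`-unsaturated vertex `a` such that `a ∈ X` or `a` is an
endpoint of some edge of `γ(X) ∪ I(X)`. -/
theorem stmt_8 {V : Type*} [Fintype V] [DecidableEq V]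
    (ℰ : Finset (Sym2 V)) (hE : ∀ e ∈ ℰ, ¬ e.IsDiag)
    (orig : Set V) (f : V → ℕ)
    (haux1 : ∀ v, v ∉ orig → f v = 1)
    (F : Finset (Sym2 V)) (hFE : F ⊆ ℰ)
    (hfac : ∀ v : V, (F.filter (fun e => v ∈ e)).card ≤ f v)
    (X : Finset V)
    (hδ : ∀ e ∈ ℰ, ((∃ a ∈ e, a ∈ X) ∧ ∃ a ∈ e, a ∉ X) →
      ∃ a x, a ∈ X ∧ a ∈ orig ∧ x ∉ X ∧ x ∉ orig ∧ e = s(a, x))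
    (η : Option (Sym2 V))
    (hη : ∀ e ∈ η, e ∈ ℰ ∧ (∃ a ∈ e, a ∈ X) ∧ ∃ a ∈ e, a ∉ X)
    (hXunsat : ∀ a ∈ X, ∀ b ∈ X,
      (F.filter (fun e => a ∈ e)).card ≠ f a →
      (F.filter (fun e => b ∈ e)).card ≠ f b → a = b)
    (hηsat : η ≠ none → ∀ a ∈ X, (F.filter (fun e => a ∈ e)).card = f a) :
    ∀ IX gamI : Finset (Sym2 V),
      IX = ((F.filter (fun e => (∃ a ∈ e, a ∈ X) ∧ ∃ a ∈ e, a ∉ X)) \ η.toFinset) ∪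
           (η.toFinset \ (F.filter (fun e => (∃ a ∈ e, a ∈ X) ∧ ∃ a ∈ e, a ∉ X))) →
      gamI = ℰ.filter (fun e => ∀ a ∈ e, a ∈ X) ∪ IX →
      ∀ a b : V,
        (F.filter (fun e => a ∈ e)).card ≠ f a →
        (F.filter (fun e => b ∈ e)).card ≠ f b →
        (a ∈ X ∨ ∃ e ∈ gamI, a ∈ e) →
        (b ∈ X ∨ ∃ e ∈ gamI, b ∈ e) →
        a = b := by
  intro IX gamI hIX hgamI a b ha hb hacase hbcase
  -- Key: an unsaturated vertex satisfying the condition is in X or is an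
  -- endpoint of η outside X.
  have key : ∀ c : V, (F.filter (fun e => c ∈ e)).card ≠ f c →
      (c ∈ X ∨ ∃ e ∈ gamI, c ∈ e) → c ∈ X ∨ (c ∉ X ∧ ∃ e0 ∈ η, c ∈ e0) := by
    intro c hc hcase
    by_cases hcX : c ∈ X
    · exact Or.inl hcX
    · right
      refine ⟨hcX, ?_⟩
      rcases hcase with h | ⟨e, he, hce⟩
      · exact absurd h hcX
      rw [hgamI, Finset.mem_union] at he
      rcases he with he | he
      · rw [Finset.mem_filter] at he
        exact absurd (he.2 c hce) hcX
      rw [hIX, Finset.mem_union] at he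
      rcases he with he | he
      · -- e ∈ δ_F(X) \ {η}: then c is the aux endpoint, saturated, contradiction
        rw [Finset.mem_sdiff, Finset.mem_filter] at he
        obtain ⟨⟨heF, hcross⟩, -⟩ := he
        obtain ⟨a0, x0, ha0X, -, hx0X, hx0orig, hee⟩ := hδ e (hFE heF) hcross
        have hcx0 : c = x0 := by
          rw [hee, Sym2.mem_iff] at hce
          rcases hce with rfl | rfl
          · exact absurd ha0X hcX
          · rfl
        have hfc : f c = 1 := haux1 c (hcx0 ▸ hx0orig)
        have hpos : 1 ≤ (F.filter (fun e => c ∈ e)).card :=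
          Finset.card_pos.mpr ⟨e, Finset.mem_filter.mpr ⟨heF, hce⟩⟩
        have := hfac c
        omega
      · rw [Finset.mem_sdiff, Option.mem_toFinset] at he
        exact ⟨e, he.1, hce⟩
  have hka := key a ha hacase
  have hkb := key b hb hbcase
  rcases hka with haX | ⟨haX, e0, he0, hae0⟩
  · rcases hkb with hbX | ⟨hbX, e1, he1, hbe1⟩
    · exact hXunsat a haX b hbX ha hb
    · exfalso
      have : η ≠ none := by
        intro h; rw [h] at he1; simp at he1
      exact ha (hηsat this a haX)
  · have hne : η ≠ none := by
      intro h; rw [h] at he0; simp at he0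
    rcases hkb with hbX | ⟨hbX, e1, he1, hbe1⟩
    · exact absurd (hηsat hne b hbX) hb
    · have he01 : e0 = e1 := by
        cases η with
        | none => simp at he0
        | some e => simp at he0 he1; exact he0 ▸ he1
      subst he01
      obtain ⟨he0E, hcross⟩ := hη e0 he0
      obtain ⟨a0, x0, ha0X, -, hx0X, -, hee⟩ := hδ e0 he0E hcross
      rw [hee, Sym2.mem_iff] at hae0 hbe1
      rcases hae0 with rfl | rfl
      · exact absurd ha0X haX
      rcases hbe1 with hb1 | hb1
      · exact absurd (hb1 ▸ ha0X) hbX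
      · exact hb1.symm
end

section
/- Let a_1, a_2, …, a_t be an arbitrary sequence of integers, and let b > 0 be an integer. Then the number of integers q with a_1 ≤ q ≤ a_t having the property that there exists an index i with 1 ≤ i < t such that both a_i ∈ [q−b, q+b] and a_{i+1} ∈ [q−b, q+b], is at least (a_t − a_1)/(b+1) − Σ_{i=1}^{t−1} max{a_{i+1} − a_i − b, 0}. -/
open Finset
open scoped Classical

/-- For an arbitrary integer sequence `a₁, …, a_t` and an
integer `b > 0`, the number of integers `q ∈ [a₁, a_t]` such that for some
`1 ≤ i < t` both `a_i` and `a_{i+1}` lie in `[q − b, q + b]` is at least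
`(a_t − a₁)/(b+1) − Σ_{i=1}^{t−1} max{a_{i+1} − a_i − b, 0}` (as rationals).
Here the sequence is indexed as `a 0, …, a (t-1)`. -/
theorem stmt_12 (t : ℕ) (ht : 1 ≤ t) (a : ℕ → ℤ) (b : ℤ) (hb : 0 < b) :
    ((((Finset.Icc (a 0) (a (t - 1))).filter (fun q =>
        ∃ i, i + 1 < t ∧ (q - b ≤ a i ∧ a i ≤ q + b) ∧
          (q - b ≤ a (i + 1) ∧ a (i + 1) ≤ q + b))).card : ℚ)) ≥
      ((a (t - 1) : ℚ) - (a 0 : ℚ)) / ((b : ℚ) + 1) -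
        ∑ i ∈ Finset.range (t - 1), max ((a (i + 1) : ℚ) - (a i : ℚ) - (b : ℚ)) 0 := by
  classical
  set P : ℤ → Prop := fun q => ∃ i, i + 1 < t ∧ (q - b ≤ a i ∧ a i ≤ q + b) ∧
      (q - b ≤ a (i + 1) ∧ a (i + 1) ≤ q + b) with hPdef
  set S : Finset ℤ := (Finset.Icc (a 0) (a (t - 1))).filter (fun q => P q) with hSdef
  -- integer sum
  have hsum0 : (0 : ℤ) ≤ ∑ i ∈ Finset.range (t - 1), max (a (i + 1) - a i - b) 0 :=
    Finset.sum_nonneg fun i _ => le_max_right _ _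
  have key : a (t - 1) - a 0 ≤ (S.card : ℤ) +
      2 * ∑ i ∈ Finset.range (t - 1), max (a (i + 1) - a i - b) 0 := by
    by_cases hM : a (t - 1) ≤ a 0
    · have hc : (0 : ℤ) ≤ (S.card : ℤ) := Int.natCast_nonneg _
      linarith
    · push_neg at hM
      have ht1 : 0 < t - 1 := by
        by_contra h
        push_neg at h
        have h1 : t = 1 := by omega
        rw [h1] at hM
        exact absurd hM (lt_irrefl _)
      set B : ℕ → Finset ℤ := fun i =>
        (Finset.Ico (a i) (a (i + 1))).filter
          (fun q => q < a (i + 1) - b ∨ a i + b < q) with hBdef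
      set Bad : Finset ℤ := (Finset.Ico (a 0) (a (t - 1))).filter (fun q => ¬ P q) with hBaddef
      have hBadsub : Bad ⊆ (Finset.range (t - 1)).biUnion B := by
        intro q hq
        rw [hBaddef, Finset.mem_filter, Finset.mem_Ico] at hq
        obtain ⟨⟨hq0, hqt⟩, hqP⟩ := hq
        have h0mem : (0 : ℕ) ∈ (Finset.range (t - 1)).filter (fun j => a j ≤ q) := by
          simp only [Finset.mem_filter, Finset.mem_range]
          exact ⟨ht1, hq0⟩
        set i := ((Finset.range (t - 1)).filter (fun j => a j ≤ q)).max' ⟨0, h0mem⟩ with hidef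
        have hi := Finset.max'_mem ((Finset.range (t - 1)).filter (fun j => a j ≤ q)) ⟨0, h0mem⟩
        rw [Finset.mem_filter, Finset.mem_range] at hi
        obtain ⟨hilt, haiq⟩ := hi
        have hnext : q < a (i + 1) := by
          by_contra h
          push_neg at h
          rcases Nat.lt_or_ge (i + 1) (t - 1) with h1 | h1
          · have : i + 1 ∈ (Finset.range (t - 1)).filter (fun j => a j ≤ q) := by
              simp only [Finset.mem_filter, Finset.mem_range]
              exact ⟨h1, h⟩
            have := Finset.le_max' _ _ this
            omega
          · have h2 : i + 1 = t - 1 := by omega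
            rw [h2] at h
            omega
        have hit : i + 1 < t := by omega
        have hdisj : a i < q - b ∨ q + b < a (i + 1) := by
          by_contra hcon
          push_neg at hcon
          exact hqP ⟨i, hit, ⟨hcon.1, by linarith⟩, ⟨by linarith, hcon.2⟩⟩
        rw [Finset.mem_biUnion]
        refine ⟨i, Finset.mem_range.2 hilt, ?_⟩
        rw [hBdef]
        simp only [Finset.mem_filter, Finset.mem_Ico]
        refine ⟨⟨haiq, hnext⟩, ?_⟩
        rcases hdisj with h | h
        · exact Or.inr (by linarith)
        · exact Or.inl (by linarith)
      have hBcard : ∀ i, ((B i).card : ℤ) ≤ 2 * max (a (i + 1) - a i - b) 0 := by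
        intro i
        have hsub : B i ⊆ Finset.Ico (a i) (a (i + 1) - b) ∪
            Finset.Ico (a i + b + 1) (a (i + 1)) := by
          intro q hq
          rw [hBdef] at hq
          simp only [Finset.mem_filter, Finset.mem_Ico] at hq
          simp only [Finset.mem_union, Finset.mem_Ico]
          rcases hq.2 with h | h
          · exact Or.inl ⟨hq.1.1, h⟩
          · exact Or.inr ⟨by linarith, hq.1.2⟩
        have h1 := Finset.card_le_card hsub
        have h2 := Finset.card_union_le (Finset.Ico (a i) (a (i + 1) - b))
          (Finset.Ico (a i + b + 1) (a (i + 1)))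
        rw [Int.card_Ico, Int.card_Ico] at h2
        have h3 : (B i).card ≤ (a (i + 1) - b - a i).toNat + (a (i + 1) - (a i + b + 1)).toNat :=
          le_trans h1 h2
        have h4 : max (a (i + 1) - a i - b) 0 = ((a (i + 1) - a i - b).toNat : ℤ) :=
          (Int.toNat_eq_max _).symm
        rw [h4]
        have := (Int.ofNat_le.2 h3 : ((B i).card : ℤ) ≤ _)
        push_cast at this ⊢
        omega
      have hBadcard : (Bad.card : ℤ) ≤
          ∑ i ∈ Finset.range (t - 1), 2 * max (a (i + 1) - a i - b) 0 := by
        calc (Bad.card : ℤ) ≤ (((Finset.range (t - 1)).biUnion B).card : ℤ) := by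
              exact_mod_cast Finset.card_le_card hBadsub
          _ ≤ ((∑ i ∈ Finset.range (t - 1), (B i).card : ℕ) : ℤ) := by
              exact_mod_cast Finset.card_biUnion_le
          _ ≤ ∑ i ∈ Finset.range (t - 1), 2 * max (a (i + 1) - a i - b) 0 := by
              push_cast
              exact Finset.sum_le_sum fun i _ => hBcard i
      -- Good part
      set Good : Finset ℤ := (Finset.Ico (a 0) (a (t - 1))).filter (fun q => P q) with hGooddef
      have hGoodS : Good ⊆ S := by
        rw [hGooddef, hSdef]
        exact Finset.filter_subset_filter _ Finset.Ico_subset_Icc_self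
      have hGoodcard : (Good.card : ℤ) ≤ (S.card : ℤ) := by
        exact_mod_cast Finset.card_le_card hGoodS
      have hsplit : Good.card + Bad.card = (Finset.Ico (a 0) (a (t - 1))).card := by
        rw [hGooddef, hBaddef]
        exact Finset.card_filter_add_card_filter_not _
      have hIco : ((Finset.Ico (a 0) (a (t - 1))).card : ℤ) = a (t - 1) - a 0 :=
        Int.card_Ico_of_le _ _ (le_of_lt hM)
      have hsplit' : (Good.card : ℤ) + (Bad.card : ℤ) = a (t - 1) - a 0 := by
        rw [← hIco]; exact_mod_cast hsplit
      have hsum2 : ∑ i ∈ Finset.range (t - 1), 2 * max (a (i + 1) - a i - b) 0 =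
          2 * ∑ i ∈ Finset.range (t - 1), max (a (i + 1) - a i - b) 0 :=
        (Finset.mul_sum _ _ _).symm
      rw [hsum2] at hBadcard
      linarith
  -- now pure rational arithmetic
  have hsumcast : ∑ i ∈ Finset.range (t - 1), max ((a (i + 1) : ℚ) - (a i : ℚ) - (b : ℚ)) 0 =
      ((∑ i ∈ Finset.range (t - 1), max (a (i + 1) - a i - b) 0 : ℤ) : ℚ) := by
    push_cast
    rfl
  rw [ge_iff_le, hsumcast, sub_le_iff_le_add, div_le_iff₀ (by positivity : (0 : ℚ) < (b : ℚ) + 1)]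
  have hkeyQ : ((a (t - 1) : ℚ) - (a 0 : ℚ)) ≤ (S.card : ℚ) +
      2 * ((∑ i ∈ Finset.range (t - 1), max (a (i + 1) - a i - b) 0 : ℤ) : ℚ) := by
    exact_mod_cast key
  have hsum0Q : (0 : ℚ) ≤ ((∑ i ∈ Finset.range (t - 1), max (a (i + 1) - a i - b) 0 : ℤ) : ℚ) := by
    exact_mod_cast hsum0
  have hcQ : (0 : ℚ) ≤ (S.card : ℚ) := Nat.cast_nonneg _
  have hbQ : (1 : ℚ) ≤ (b : ℚ) := by exact_mod_cast hb
  nlinarith [hkeyQ, hsum0Q, hcQ, hbQ]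
end
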